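/- arXiv:2502.13432 — 10 statements merged into one kernel-verified Lean document; each statement's English description precedes it below -/
import Mathlib

section
/- If $A > 0$ and $\{a_n\}_{n=1}^\infty$ is a sequence of non-negative numbers with $a_1 \le A$ and $a_m \le a_{m-1} - \frac{2}{m} a_{m-1} + \frac{A}{m^2}$ for all $m \ge 2$, then $a_m \le \frac{A}{m}$ for all $m \ge 1$. -/
theorem stmt_2 (A : ℝ) (hA : 0 < A) (a : ℕ → ℝ)
    (hnn : ∀ n, 1 ≤ n → 0 ≤ a n) (h1 : a 1 ≤ A)
    (hrec : ∀ m, 2 ≤ m → a m ≤ a (m - 1) - (2 / (m : ℝ)) * a (m - 1) + A / (m : ℝ) ^ 2) :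
    ∀ m, 1 ≤ m → a m ≤ A / (m : ℝ) := by
  intro m hm
  induction m, hm using Nat.le_induction with
  | base => simpa using h1
  | succ n hn ih =>
    have h2 : 2 ≤ n + 1 := by omega
    have hrec' := hrec (n + 1) h2
    simp only [Nat.add_sub_cancel] at hrec'
    have ihn : a n ≤ A / (n : ℝ) := ih
    have hn1 : (1 : ℝ) ≤ (n : ℝ) := by exact_mod_cast hn
    have hnp : (0 : ℝ) < (n : ℝ) := by linarith
    have hm1 : (0 : ℝ) < (n : ℝ) + 1 := by linarith
    have hcoef : (0 : ℝ) ≤ 1 - 2 / ((n : ℝ) + 1) := by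
      rw [sub_nonneg, div_le_one hm1]; linarith
    have key : a (n + 1) ≤ (1 - 2 / ((n : ℝ) + 1)) * (A / n) + A / ((n : ℝ) + 1) ^ 2 := by
      push_cast at hrec' ⊢
      nlinarith [hnn n hn, mul_nonneg hcoef (sub_nonneg.2 ihn)]
    have final : (1 - 2 / ((n : ℝ) + 1)) * (A / n) + A / ((n : ℝ) + 1) ^ 2 ≤ A / ((n : ℝ) + 1) := by
      have e : (1 - 2/((n:ℝ)+1)) * (A / n) + A / ((n:ℝ)+1)^2
          = (A*((n:ℝ)^2+n-1))/(n*((n:ℝ)+1)^2) := by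
        field_simp
        ring
      rw [e, div_le_div_iff₀ (by positivity) hm1]
      nlinarith [hA.le, hnp]
    push_cast
    linarith
end

section
/- Let $0 < \alpha < \gamma \le 1$ and $A > 1$. Let $1 \ge a_1 \ge a_2 \ge \dots > 0$ be a non-increasing sequence of positive numbers with the property: whenever $a_\nu \ge A \nu^{-\alpha}$ for some $\nu \in \mathbb{N}$, we have $a_{\nu+1} \le a_\nu(1 - \gamma/\nu)$. Then there exists a constant $B = B(A, \alpha, \gamma)$ such that $a_n \le B n^{-\alpha}$ for all $n \ge 1$. -/
theorem stmt_3 (α γ A : ℝ) (hα : 0 < α) (hαγ : α < γ) (hγ : γ ≤ 1) (hA : 1 < A)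
    (a : ℕ → ℝ) (ha1 : a 1 ≤ 1)
    (hpos : ∀ n, 1 ≤ n → 0 < a n)
    (hdec : ∀ n, 1 ≤ n → a (n + 1) ≤ a n)
    (hcond : ∀ ν : ℕ, 1 ≤ ν → A * (ν : ℝ) ^ (-α) ≤ a ν → a (ν + 1) ≤ a ν * (1 - γ / ν)) :
    ∃ B : ℝ, 0 < B ∧ ∀ n : ℕ, 1 ≤ n → a n ≤ B * (n : ℝ) ^ (-α) := by
  have hα1 : α ≤ 1 := le_trans hαγ.le hγ
  refine ⟨2 * A, by linarith, ?_⟩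
  -- key claim: a n * n^α ≤ 2A
  have key : ∀ n : ℕ, 1 ≤ n → a n * (n : ℝ) ^ α ≤ 2 * A := by
    intro n hn
    induction n with
    | zero => omega
    | succ m ih =>
      rcases Nat.eq_or_lt_of_le hn with h1 | h1
      · -- n = 1
        have : ((1 : ℕ) : ℝ) ^ α = 1 := by
          simp
        rw [← h1]
        simpa [this] using by nlinarith
      · have hm : 1 ≤ m := by omega
        have ihm := ih hm
        have hmpos : (0 : ℝ) < m := by exact_mod_cast hm
        have hm1pos : (0 : ℝ) < (m : ℝ) + 1 := by linarith
        have hpow_pos : (0 : ℝ) < (m : ℝ) ^ α := Real.rpow_pos_of_pos hmpos α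
        have hpow1_pos : (0 : ℝ) < ((m : ℝ) + 1) ^ α := Real.rpow_pos_of_pos hm1pos α
        have hcast : ((m + 1 : ℕ) : ℝ) = (m : ℝ) + 1 := by push_cast; ring
        rw [hcast]
        by_cases hthr : A * (m : ℝ) ^ (-α) ≤ a m
        · -- above threshold: decay step
          have hstep := hcond m hm hthr
          have hγm : 0 ≤ 1 - γ / m := by
            have : γ / m ≤ 1 := by
              rw [div_le_one hmpos]
              have : (1 : ℝ) ≤ m := by exact_mod_cast hm
              linarith
            linarith
          -- (1+1/m)^α ≤ 1 + α/m
          have hb : ((m : ℝ) + 1) ^ α ≤ (1 + α / m) * (m : ℝ) ^ α := by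
            have h1m : -1 ≤ (1 : ℝ) / m := le_trans (by norm_num) (by positivity : (0:ℝ) ≤ 1 / m)
            have := rpow_one_add_le_one_add_mul_self h1m hα.le hα1
            have heq : (m : ℝ) + 1 = (1 + 1 / m) * m := by field_simp
            rw [heq, Real.mul_rpow (by positivity) hmpos.le]
            have : (1 + 1 / (m:ℝ)) ^ α ≤ 1 + α / m := by
              calc (1 + 1 / (m:ℝ)) ^ α ≤ 1 + α * (1 / m) := this
                _ = 1 + α / m := by ring
            nlinarith
          have hapos := hpos m hm
          have ham1pos := (hpos (m + 1) (by omega)).le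
          calc a (m + 1) * ((m : ℝ) + 1) ^ α
              ≤ a m * (1 - γ / m) * ((1 + α / m) * (m : ℝ) ^ α) := by
                apply mul_le_mul hstep hb hpow1_pos.le
                positivity
            _ ≤ a m * (m : ℝ) ^ α := by
                have hαγm : α / m < γ / m := by gcongr
                have hfac : (1 - γ / m) * (1 + α / m) ≤ 1 := by
                  nlinarith [mul_pos (div_pos (lt_trans hα hαγ) hmpos)
                    (div_pos hα hmpos)]
                nlinarith [mul_le_mul_of_nonneg_right hfac
                  (mul_nonneg hapos.le hpow_pos.le)]
            _ ≤ 2 * A := ihm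
        · push_neg at hthr
          -- below threshold
          have hstep := hdec m hm
          have ham1pos := (hpos (m + 1) (by omega)).le
          have h2 : ((m : ℝ) + 1) ^ α ≤ 2 ^ α * (m : ℝ) ^ α := by
            rw [← Real.mul_rpow (by norm_num) hmpos.le]
            apply Real.rpow_le_rpow hm1pos.le _ hα.le
            have : (1 : ℝ) ≤ m := by exact_mod_cast hm
            linarith
          have h2a : (2 : ℝ) ^ α ≤ 2 := by
            calc (2 : ℝ) ^ α ≤ 2 ^ (1 : ℝ) :=
              Real.rpow_le_rpow_of_exponent_le (by norm_num) hα1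
              _ = 2 := by norm_num
          have hlt : a m * (m : ℝ) ^ α < A := by
            have := mul_lt_mul_of_pos_right hthr hpow_pos
            rwa [mul_assoc, ← Real.rpow_add hmpos, neg_add_cancel, Real.rpow_zero,
              mul_one] at this
          calc a (m + 1) * ((m : ℝ) + 1) ^ α
              ≤ a m * (2 ^ α * (m : ℝ) ^ α) := by
                apply mul_le_mul hstep h2 hpow1_pos.le (hpos m hm).le
            _ = 2 ^ α * (a m * (m : ℝ) ^ α) := by ring
            _ ≤ 2 * A := by nlinarith [Real.rpow_pos_of_pos (by norm_num : (0:ℝ) < 2) α]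
  intro n hn
  have hnpos : (0 : ℝ) < n := by exact_mod_cast hn
  have h := key n hn
  have hpow_pos : (0 : ℝ) < (n : ℝ) ^ α := Real.rpow_pos_of_pos hnpos α
  rw [Real.rpow_neg hnpos.le, ← div_eq_mul_inv, le_div_iff₀ hpow_pos]
  exact h
end

section
/- Let $r > 0$ and $A > 0$. Assume a sequence of non-negative reals $\{a_n\}_{n=1}^\infty$ satisfies $a_1 \le A$ and $a_{n+1} \le a_n\left(1 - (a_n/A)^{1/r}\right)$ for all $n \ge 1$. Then: (i) if $r \in (0,1]$, $a_m \le A m^{-r}$ for all $m$; (ii) if $r \ge 1$, $a_m \le A r^r m^{-r}$ for all $m$. -/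
open Real

lemma key_lemma (r : ℝ) (hr : 1 ≤ r) (b : ℕ → ℝ) (hnn : ∀ n, 1 ≤ n → 0 ≤ b n)
    (h1 : b 1 ≤ r) (hrec : ∀ n, 1 ≤ n → b (n + 1) ≤ b n * (1 - b n / r)) :
    ∀ n, 1 ≤ n → b n ≤ r / n := by
  intro n hn
  induction n, hn using Nat.le_induction with
  | base => simpa using h1
  | succ n hn ih =>
    have hb : 0 ≤ b n := hnn n hn
    have hrn : (1 : ℝ) ≤ n := by exact_mod_cast hn
    have hrpos : (0 : ℝ) < r := lt_of_lt_of_le one_pos hr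
    have hnb : b n * (n : ℝ) ≤ r := (le_div_iff₀ (by linarith)).mp ih
    have hbr : b n ≤ r := by nlinarith
    have h2 := hrec n hn
    have hn1 : (0 : ℝ) < (n : ℝ) + 1 := by linarith
    push_cast
    rw [le_div_iff₀ hn1]
    have hprod : (0:ℝ) ≤ (r - (n:ℝ) * b n) * (r - b n) :=
      mul_nonneg (by nlinarith) (by linarith)
    have h3 : b n * (1 - b n / r) * ((n : ℝ) + 1) ≤ r := by
      rw [mul_comm (b n), mul_assoc, ← sub_nonneg]
      have hexp : r - (1 - b n / r) * (b n * ((n:ℝ) + 1))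
          = ((n:ℝ) * ((r - (n:ℝ) * b n) * (r - b n) + b n ^ 2)) / ((n:ℝ) * r) := by
        field_simp
        ring
      rw [hexp]
      exact div_nonneg (mul_nonneg (by linarith)
        (add_nonneg hprod (sq_nonneg _))) (by positivity)
    calc b (n + 1) * ((n : ℝ) + 1) ≤ b n * (1 - b n / r) * ((n : ℝ) + 1) :=
          mul_le_mul_of_nonneg_right h2 (by linarith)
      _ ≤ r := h3

theorem stmt_4 (r A : ℝ) (hr : 0 < r) (hA : 0 < A) (a : ℕ → ℝ)
    (hnn : ∀ n, 1 ≤ n → 0 ≤ a n) (h1 : a 1 ≤ A)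
    (hrec : ∀ n, 1 ≤ n → a (n + 1) ≤ a n * (1 - (a n / A) ^ (1 / r))) :
    (r ≤ 1 → ∀ m : ℕ, 1 ≤ m → a m ≤ A * (m : ℝ) ^ (-r)) ∧
    (1 ≤ r → ∀ m : ℕ, 1 ≤ m → a m ≤ A * r ^ r * (m : ℝ) ^ (-r)) := by
  have hle : ∀ n, 1 ≤ n → a n ≤ A := by
    intro n hn
    induction n, hn using Nat.le_induction with
    | base => exact h1
    | succ n hn ih =>
      have hp : (0 : ℝ) ≤ (a n / A) ^ (1 / r) :=
        Real.rpow_nonneg (div_nonneg (hnn n hn) hA.le) _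
      calc a (n + 1) ≤ a n * (1 - (a n / A) ^ (1 / r)) := hrec n hn
        _ ≤ a n * 1 := mul_le_mul_of_nonneg_left (by linarith) (hnn n hn)
        _ ≤ A := by rw [mul_one]; exact ih
  set b : ℕ → ℝ := fun n => (a n / A) ^ (1 / r) with hbdef
  have hbnn : ∀ n, 1 ≤ n → 0 ≤ b n := fun n hn =>
    Real.rpow_nonneg (div_nonneg (hnn n hn) hA.le) _
  have hble : ∀ n, 1 ≤ n → b n ≤ 1 := fun n hn =>
    Real.rpow_le_one (div_nonneg (hnn n hn) hA.le)
      ((div_le_one hA).mpr (hle n hn)) (by positivity)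
  have hbr : ∀ n, 1 ≤ n → b n ^ r = a n / A := by
    intro n hn
    rw [hbdef]
    rw [← Real.rpow_mul (div_nonneg (hnn n hn) hA.le), one_div,
      inv_mul_cancel₀ hr.ne', Real.rpow_one]
  -- the key recurrence for b
  have hbrec : ∀ n, 1 ≤ n → b (n + 1) ≤ b n * (1 - b n) ^ (1 / r) := by
    intro n hn
    have h2 : a (n + 1) / A ≤ a n / A * (1 - b n) := by
      rw [div_mul_eq_mul_div, div_le_div_iff_of_pos_right hA]
      exact hrec n hn
    have hmul : b n * (1 - b n) ^ (1 / r) = (a n / A * (1 - b n)) ^ (1 / r) := by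
      rw [Real.mul_rpow (div_nonneg (hnn n hn) hA.le) (by linarith [hble n hn])]
    rw [hmul, hbdef]
    exact Real.rpow_le_rpow (div_nonneg (hnn (n+1) (by omega)) hA.le) h2 (by positivity)
  refine ⟨?_, ?_⟩
  · -- case r ≤ 1
    intro hr1 m hm
    have hb1 : b 1 ≤ 1 := hble 1 le_rfl
    have hbrec1 : ∀ n, 1 ≤ n → b (n + 1) ≤ b n * (1 - b n / 1) := by
      intro n hn
      have h3 : (1 - b n) ^ (1 / r) ≤ 1 - b n := by
        rcases eq_or_lt_of_le (hble n hn) with h | h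
        · rw [h, sub_self, Real.zero_rpow (by positivity : (1:ℝ)/r ≠ 0)]
        · calc (1 - b n) ^ (1 / r) ≤ (1 - b n) ^ (1 : ℝ) :=
              Real.rpow_le_rpow_of_exponent_ge (by linarith) (by linarith [hbnn n hn])
                ((le_div_iff₀ hr).mpr (by linarith))
            _ = 1 - b n := Real.rpow_one _
      calc b (n + 1) ≤ b n * (1 - b n) ^ (1 / r) := hbrec n hn
        _ ≤ b n * (1 - b n) := mul_le_mul_of_nonneg_left h3 (hbnn n hn)
        _ = b n * (1 - b n / 1) := by ring
    have hkey := key_lemma 1 le_rfl b hbnn (by simpa using hb1) hbrec1 m hm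
    have hmpos : (0 : ℝ) < m := by exact_mod_cast hm
    have : b m ^ r ≤ ((m : ℝ)⁻¹) ^ r := by
      apply Real.rpow_le_rpow (hbnn m hm) _ hr.le
      rw [← one_div]; exact hkey
    rw [hbr m hm, Real.inv_rpow hmpos.le, ← Real.rpow_neg hmpos.le] at this
    rw [div_le_iff₀ hA] at this
    linarith [this]
  · -- case 1 ≤ r
    intro hr1 m hm
    have hb1 : b 1 ≤ r := le_trans (hble 1 le_rfl) hr1
    have hbrec1 : ∀ n, 1 ≤ n → b (n + 1) ≤ b n * (1 - b n / r) := by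
      intro n hn
      have h3 : (1 - b n) ^ (1 / r) ≤ 1 - b n / r := by
        have := rpow_one_add_le_one_add_mul_self
          (s := -b n) (by linarith [hble n hn]) (p := 1 / r)
          (by positivity) ((div_le_one hr).mpr hr1)
        calc (1 - b n) ^ (1 / r) = (1 + -b n) ^ (1 / r) := by ring_nf
          _ ≤ 1 + 1 / r * -b n := this
          _ = 1 - b n / r := by ring
      calc b (n + 1) ≤ b n * (1 - b n) ^ (1 / r) := hbrec n hn
        _ ≤ b n * (1 - b n / r) := mul_le_mul_of_nonneg_left h3 (hbnn n hn)
    have hkey := key_lemma r hr1 b hbnn hb1 hbrec1 m hm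
    have hmpos : (0 : ℝ) < m := by exact_mod_cast hm
    have : b m ^ r ≤ (r / (m : ℝ)) ^ r :=
      Real.rpow_le_rpow (hbnn m hm) hkey hr.le
    rw [hbr m hm, Real.div_rpow hr.le hmpos.le] at this
    rw [div_le_iff₀ hA] at this
    rw [Real.rpow_neg hmpos.le]
    calc a m ≤ r ^ r / (m : ℝ) ^ r * A := this
      _ = A * r ^ r * ((m : ℝ) ^ r)⁻¹ := by ring
end

section
/- Let $\varphi : [0,1] \to [0,1]$ be an increasing convex function with $\varphi(0) = 0$, and let $A > 0$. Assume a sequence $A \ge a_1 \ge a_2 \ge \cdots \ge 0$ satisfies $a_{n+1} \le a_n(1 - \varphi(a_n/A))$ for all $n \ge 1$. Then $a_m \le A \varphi^{-1}(1/m)$ for all $m \ge 1$, where $\varphi^{-1}(1/m)$ denotes any value $u$ with $\varphi(u) \ge 1/m$ minimal (i.e., $\varphi(a_m/A) \le 1/m$). -/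
theorem stmt_5 (φ : ℝ → ℝ) (hmono : MonotoneOn φ (Set.Icc 0 1))
    (hconv : ConvexOn ℝ (Set.Icc 0 1) φ)
    (hmap : ∀ x ∈ Set.Icc (0 : ℝ) 1, φ x ∈ Set.Icc (0 : ℝ) 1)
    (hφ0 : φ 0 = 0)
    (A : ℝ) (hA : 0 < A) (a : ℕ → ℝ)
    (ha1 : a 1 ≤ A) (hnn : ∀ n, 1 ≤ n → 0 ≤ a n)
    (hdec : ∀ n, 1 ≤ n → a (n + 1) ≤ a n)
    (hrec : ∀ n, 1 ≤ n → a (n + 1) ≤ a n * (1 - φ (a n / A))) :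
    ∀ m : ℕ, 1 ≤ m → φ (a m / A) ≤ 1 / m := by
  have haA : ∀ n, 1 ≤ n → a n ≤ A := by
    intro n hn
    induction n with
    | zero => omega
    | succ k ih =>
      rcases Nat.lt_or_ge 1 (k + 1) with h | h
      · have hk : 1 ≤ k := by omega
        exact le_trans (hdec k hk) (ih hk)
      · have : k = 0 := by omega
        subst this; exact ha1
  have hbmem : ∀ n, 1 ≤ n → a n / A ∈ Set.Icc (0:ℝ) 1 := by
    intro n hn
    constructor
    · exact div_nonneg (hnn n hn) hA.le
    · rw [div_le_one hA]; exact haA n hn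
  set x : ℕ → ℝ := fun n => φ (a n / A) with hxdef
  have hx01 : ∀ n, 1 ≤ n → x n ∈ Set.Icc (0:ℝ) 1 := fun n hn => hmap _ (hbmem n hn)
  have h0mem : (0:ℝ) ∈ Set.Icc (0:ℝ) 1 := by constructor <;> norm_num
  have hstep : ∀ n, 1 ≤ n → x (n+1) ≤ x n * (1 - x n) := by
    intro n hn
    have hb := hbmem n hn
    have hxn := hx01 n hn
    have hprodmem : (a n / A) * (1 - x n) ∈ Set.Icc (0:ℝ) 1 := by
      constructor
      · exact mul_nonneg hb.1 (by linarith [hxn.2])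
      · exact mul_le_one₀ hb.2 (by linarith [hxn.2]) (by linarith [hxn.1])
    have h1 : a (n+1) / A ≤ (a n / A) * (1 - x n) := by
      rw [div_mul_eq_mul_div]
      exact div_le_div_of_nonneg_right (hrec n hn) hA.le
    have h2 : x (n+1) ≤ φ ((a n / A) * (1 - x n)) :=
      hmono (hbmem (n+1) (by omega)) hprodmem h1
    have h3 : φ ((1 - x n) * (a n / A) + x n * 0) ≤ (1 - x n) * φ (a n / A) + x n * φ 0 := by
      have := hconv.2 hb h0mem (by linarith [hxn.2] : (0:ℝ) ≤ 1 - x n) hxn.1 (by ring)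
      simpa using this
    have h4 : φ ((a n / A) * (1 - x n)) ≤ (1 - x n) * x n := by
      calc φ ((a n / A) * (1 - x n)) = φ ((1 - x n) * (a n / A) + x n * 0) := by ring_nf
        _ ≤ (1 - x n) * φ (a n / A) + x n * φ 0 := h3
        _ = (1 - x n) * x n := by rw [hφ0]; ring
      
    calc x (n+1) ≤ φ ((a n / A) * (1 - x n)) := h2
      _ ≤ (1 - x n) * x n := h4
      _ = x n * (1 - x n) := by ring
  intro m hm
  show x m ≤ 1 / m
  induction m with
  | zero => omega
  | succ k ih =>
    rcases Nat.lt_or_ge 1 (k + 1) with h | h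
    · have hk : 1 ≤ k := by omega
      have hxk := hx01 k hk
      have ihk := ih hk
      have hK : (1:ℝ) ≤ (k:ℝ) := by exact_mod_cast hk
      have hstepk := hstep k hk
      have hgoal : x k * (1 - x k) ≤ 1 / (k + 1 : ℝ) := by
        rcases le_or_gt (x k) (1 / (k + 1 : ℝ)) with hc | hc
        · nlinarith [hxk.1, hxk.2]
        · have h1k : (0:ℝ) < (k:ℝ) := by linarith
          have h1k1 : (0:ℝ) < (k:ℝ) + 1 := by linarith
          have hmul : x k * (1 - x k) ≤ (1/(k:ℝ)) * (1 - 1/((k:ℝ)+1)) :=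
            mul_le_mul ihk (by linarith) (by linarith [hxk.2]) (by positivity)
          have heq : (1/(k:ℝ)) * (1 - 1/((k:ℝ)+1)) = 1/((k:ℝ)+1) := by
            field_simp
            ring
          linarith
      have : x (k+1) ≤ 1 / (k+1 : ℝ) := le_trans hstepk hgoal
      simpa using this
    · have : k = 0 := by omega
      subst this
      have := (hx01 1 le_rfl).2
      simpa using this
end

section
/- Let $\varphi : [0,1] \to [0,1]$ be increasing, convex, differentiable with $\varphi(0)=0$, and suppose there exists $\beta > 0$ such that $x \varphi'(\theta) \ge \beta \varphi(x)$ for all $x \in (0,1]$ and $\theta \in (0,x]$. If a sequence $A \ge a_1 \ge a_2 \ge \cdots \ge 0$ satisfies $a_{n+1} \le a_n(1 - \varphi(a_n/A))$, then $\varphi(a_m/A) \le 1/(\beta m)$ for all $m \ge 1$. -/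
theorem stmt_6 (φ φ' : ℝ → ℝ) (hmono : MonotoneOn φ (Set.Icc 0 1))
    (hconv : ConvexOn ℝ (Set.Icc 0 1) φ)
    (hmap : ∀ x ∈ Set.Icc (0 : ℝ) 1, φ x ∈ Set.Icc (0 : ℝ) 1)
    (hφ0 : φ 0 = 0)
    (hderiv : ∀ θ ∈ Set.Ioc (0 : ℝ) 1, HasDerivAt φ (φ' θ) θ)
    (β : ℝ) (hβ : 0 < β)
    (hβcond : ∀ x ∈ Set.Ioc (0 : ℝ) 1, ∀ θ ∈ Set.Ioc (0 : ℝ) x, β * φ x ≤ x * φ' θ)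
    (A : ℝ) (hA : 0 < A) (a : ℕ → ℝ)
    (ha1 : a 1 ≤ A) (hnn : ∀ n, 1 ≤ n → 0 ≤ a n)
    (hdec : ∀ n, 1 ≤ n → a (n + 1) ≤ a n)
    (hrec : ∀ n, 1 ≤ n → a (n + 1) ≤ a n * (1 - φ (a n / A))) :
    ∀ m : ℕ, 1 ≤ m → φ (a m / A) ≤ 1 / (β * m) := by
  have hle : ∀ n, 1 ≤ n → a n ≤ A := by
    intro n hn
    induction n, hn using Nat.le_induction with
    | base => exact ha1
    | succ n hn ih => exact (hdec n hn).trans ih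
  have hb : ∀ n, 1 ≤ n → a n / A ∈ Set.Icc (0:ℝ) 1 := by
    intro n hn
    exact ⟨div_nonneg (hnn n hn) hA.le, (div_le_one hA).2 (hle n hn)⟩
  -- MVT key lemma
  have key : ∀ x ∈ Set.Ioc (0:ℝ) 1, ∀ z, 0 < z → z < x →
      β * φ x * (x - z) ≤ x * (φ x - φ z) := by
    intro x hx z hz hzx
    obtain ⟨θ, hθ, hθeq⟩ := exists_hasDerivAt_eq_slope φ φ' hzx
      (fun w hw => ((hderiv w ⟨lt_of_lt_of_le hz hw.1, hw.2.trans hx.2⟩).continuousAt).continuousWithinAt)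
      (fun w hw => hderiv w ⟨hz.trans hw.1, hw.2.le.trans hx.2⟩)
    have h1 : β * φ x ≤ x * φ' θ := hβcond x hx θ ⟨hz.trans hθ.1, hθ.2.le⟩
    have hne : x - z ≠ 0 := by linarith
    have h2 : φ x - φ z = φ' θ * (x - z) := by
      rw [hθeq, div_mul_cancel₀ _ hne]
    rw [h2, ← mul_assoc]
    exact mul_le_mul_of_nonneg_right h1 (by linarith)
  by_cases hβ1 : β ≤ 1
  · -- decay step
    have step : ∀ n, 1 ≤ n →
        φ (a (n+1) / A) ≤ φ (a n / A) * (1 - β * φ (a n / A)) := by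
      intro n hn
      have hx := hb n hn
      have hy := hb (n+1) (by omega)
      have hα := hmap _ hx
      have hyx : a (n+1) / A ≤ (a n / A) * (1 - φ (a n / A)) := by
        rw [div_le_iff₀ hA]
        calc a (n+1) ≤ a n * (1 - φ (a n / A)) := hrec n hn
          _ = a n / A * (1 - φ (a n / A)) * A := by field_simp
      set x := a n / A with hxdef
      set y := a (n+1) / A with hydef
      rcases eq_or_lt_of_le hx.1 with hx0 | hx0
      · have hφx : φ x = 0 := by rw [← hx0, hφ0]
        have hy0 : y = 0 := by
          have : y ≤ 0 := by rw [← hx0] at hyx; simpa using hyx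
          linarith [hy.1]
        rw [hy0, hφ0, hφx]; norm_num
      · rcases eq_or_lt_of_le hα.1 with hα0 | hα0
        · have hyx' : y ≤ x := by rw [← hα0] at hyx; simpa using hyx
          have h := hmono hy hx hyx'
          rw [← hα0] at h ⊢; simpa using h
        · rcases eq_or_lt_of_le hα.2 with hα1 | hα1
          · have hy0 : y = 0 := by
              have : y ≤ 0 := by rw [← hα1] at hyx; simpa using hyx
              linarith [hy.1]
            rw [hy0, hφ0, hα1]
            nlinarith
          · -- 0 < φ x < 1, 0 < x
            have hz0 : 0 < x * (1 - φ x) := mul_pos hx0 (by linarith)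
            have hzx : x * (1 - φ x) < x := by nlinarith
            have hk := key x ⟨hx0, hx.2⟩ (x * (1 - φ x)) hz0 hzx
            have hzmem : x * (1 - φ x) ∈ Set.Icc (0:ℝ) 1 :=
              ⟨hz0.le, by linarith [hx.2]⟩
            have hmy : φ y ≤ φ (x * (1 - φ x)) := hmono hy hzmem hyx
            nlinarith [hk, hmy, hx0]
    -- induction
    intro m hm
    induction m, hm using Nat.le_induction with
    | base =>
      have h1 : φ (a 1 / A) ≤ 1 := (hmap _ (hb 1 le_rfl)).2
      rw [Nat.cast_one, mul_one, le_div_iff₀ hβ]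
      nlinarith
    | succ n hn ih =>
      have hst := step n hn
      have hu0 : 0 ≤ φ (a n / A) := (hmap _ (hb n hn)).1
      set u := φ (a n / A) with hu
      set v := φ (a (n+1) / A) with hv
      have hn1 : (1:ℝ) ≤ (n:ℝ) := by exact_mod_cast hn
      have hpos : (0:ℝ) < β * n := by positivity
      have h1 : β * u * n ≤ 1 := by
        have := (le_div_iff₀ hpos).1 ih
        nlinarith
      have hβu : β * u ≤ 1 := by nlinarith
      have hpos2 : (0:ℝ) < β * ((n:ℝ) + 1) := by positivity
      have goal' : v * (β * ((n:ℝ) + 1)) ≤ 1 := by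
        nlinarith [mul_le_mul_of_nonneg_left hst hpos2.le,
          mul_nonneg (by linarith : (0:ℝ) ≤ 1 - β * u * n) (by linarith : (0:ℝ) ≤ 1 - β * u),
          sq_nonneg (β * u)]
      rw [le_div_iff₀ (by push_cast; positivity)]
      push_cast
      linarith [goal']
  · -- β > 1 : φ vanishes
    push_neg at hβ1
    have hzero : ∀ x ∈ Set.Icc (0:ℝ) 1, φ x = 0 := by
      intro x hx
      rcases eq_or_lt_of_le hx.1 with h0 | h0
      · rw [← h0]; exact hφ0
      · have hxI : x ∈ Set.Ioc (0:ℝ) 1 := ⟨h0, hx.2⟩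
        have hβ1' : (0:ℝ) < β - 1 := by linarith
        have h2β : (0:ℝ) < 2 * β := by linarith
        have hz0 : 0 < x * (β - 1) / (2 * β) := div_pos (mul_pos h0 hβ1') h2β
        have hzx : x * (β - 1) / (2 * β) < x := by
          rw [div_lt_iff₀ h2β]; nlinarith
        have hk := key x hxI _ hz0 hzx
        have hφz := (hmap _ ⟨hz0.le, by linarith [hx.2]⟩).1
        have hφx := hmap x hx
        have h2 : x * (β - 1) / (2 * β) * (2 * β) = x * (β - 1) := by
          field_simp
        have : φ x ≤ 0 := by
          nlinarith [hk, hφz, h2, hφx.1, mul_pos h0 hβ1', mul_nonneg h0.le hφz]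
        exact le_antisymm this hφx.1
    intro m hm
    have hm1 : (1:ℝ) ≤ (m:ℝ) := by exact_mod_cast hm
    rw [hzero _ (hb m hm)]
    positivity
end

section
/- Let $q \in (1,2]$, $B > 0$, $\delta \in (0,1]$, $0 < v \le 1$, and let $N = \lfloor \delta^{-1/q} \rfloor$. If a non-negative sequence $a_0, a_1, \dots, a_N$ satisfies $a_m \le a_{m-1} + \inf_{0 \le \lambda \le 1}(-\lambda v a_{m-1} + B \lambda^q) + \delta$ for all $1 \le m \le N$, then $a_m \le C(q, v, B, a_0)\, m^{1-q}$ for $1 \le m \le N$, where $C(q,v,B,a_0) \le C'(q,B,a_0) v^{-q}$. -/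
open Real

lemma key_aux (q B C : ℝ) (hq1 : 1 < q) (hq2 : q ≤ 2) (hB : 0 < B)
    (hC : B * q ^ q + 1 ≤ C) (hC0 : 0 ≤ C) (M : ℝ) (hM : 2 ≤ M) :
    C * ((M - 1) ^ (1 - q) * (1 - q / M)) + B * q ^ q * M ^ (-q) + M ^ (-q)
      ≤ C * M ^ (1 - q) := by
  have hM0 : (0:ℝ) < M := by linarith
  have h1 : (0:ℝ) < 1 - 1/M := by
    have : 1/M ≤ 1/2 := by
      apply div_le_div_of_nonneg_left <;> linarith
    linarith
  have hMm1 : M - 1 = M * (1 - 1/M) := by field_simp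
  have e1 : (M-1) ^ (1-q) = M ^ (1-q) * (1 - 1/M) ^ (1-q) := by
    rw [hMm1, Real.mul_rpow hM0.le h1.le]
  have bern : 1 - q / M ≤ (1 - 1/M) ^ q := by
    have h := one_add_mul_self_le_rpow_one_add (s := -(1/M)) (by nlinarith) (le_of_lt hq1)
    have e : 1 + -(1/M) = 1 - 1/M := by ring
    rw [e] at h
    calc 1 - q/M = 1 + q * (-(1/M)) := by ring
    _ ≤ (1 - 1/M) ^ q := h
  have e2 : (1 - 1/M) ^ (1-q) * (1 - 1/M) ^ q = 1 - 1/M := by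
    rw [← Real.rpow_add h1]; norm_num
  have h3 : (1 - 1/M) ^ (1-q) * (1 - q/M) ≤ 1 - 1/M := by
    calc (1 - 1/M) ^ (1-q) * (1 - q/M) ≤ (1 - 1/M) ^ (1-q) * ((1 - 1/M) ^ q) :=
          mul_le_mul_of_nonneg_left bern (Real.rpow_nonneg h1.le _)
    _ = 1 - 1/M := e2
  have e3 : M ^ (1-q) * (1/M) = M ^ (-q) := by
    rw [one_div, ← Real.rpow_neg_one M, ← Real.rpow_add hM0]
    congr 1; ring
  have h4 : (M-1) ^ (1-q) * (1 - q/M) ≤ M ^ (1-q) - M ^ (-q) := by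
    rw [e1]
    have := mul_le_mul_of_nonneg_left h3 (Real.rpow_nonneg hM0.le (1-q))
    calc M ^ (1-q) * (1 - 1/M) ^ (1-q) * (1 - q/M)
        = M ^ (1-q) * ((1 - 1/M) ^ (1-q) * (1 - q/M)) := by ring
      _ ≤ M ^ (1-q) * (1 - 1/M) := this
      _ = M ^ (1-q) - M ^ (1-q) * (1/M) := by ring
      _ = M ^ (1-q) - M ^ (-q) := by rw [e3]
  have hMq : 0 ≤ M ^ (-q) := Real.rpow_nonneg hM0.le _
  nlinarith [mul_le_mul_of_nonneg_left h4 hC0]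

set_option maxHeartbeats 1000000 in
theorem stmt_7 (q B a0 : ℝ) (hq1 : 1 < q) (hq2 : q ≤ 2) (hB : 0 < B) :
    ∃ C' : ℝ, 0 < C' ∧
      ∀ (v δ : ℝ) (a : ℕ → ℝ), 0 < v → v ≤ 1 → 0 < δ → δ ≤ 1 →
      a 0 = a0 →
      (∀ m : ℕ, m ≤ Nat.floor (δ ^ (-(1 : ℝ) / q)) → 0 ≤ a m) →
      (∀ m : ℕ, 1 ≤ m → m ≤ Nat.floor (δ ^ (-(1 : ℝ) / q)) →
        a m ≤ a (m - 1) +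
          sInf ((fun l : ℝ => -(l * v * a (m - 1)) + B * l ^ q) '' Set.Icc (0 : ℝ) 1) + δ) →
      ∀ m : ℕ, 1 ≤ m → m ≤ Nat.floor (δ ^ (-(1 : ℝ) / q)) →
        a m ≤ C' * v ^ (-q) * (m : ℝ) ^ (1 - q) := by
  have hq0 : (0:ℝ) < q := by linarith
  have hqq4 : q ^ q ≤ 4 := by
    calc q ^ q ≤ (2:ℝ) ^ q := Real.rpow_le_rpow (by linarith) hq2 hq0.le
    _ ≤ (2:ℝ) ^ (2:ℝ) := Real.rpow_le_rpow_of_exponent_le one_le_two hq2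
    _ = 4 := by
        rw [show (2:ℝ) = ((2:ℕ):ℝ) by norm_num, Real.rpow_natCast]; norm_num
  refine ⟨4 * (a0 ⊔ 0) + 4 * B + 5, by positivity, ?_⟩
  set C : ℝ := 4 * (a0 ⊔ 0) + 4 * B + 5 with hCdef
  intro v δ a hv hv1 hδ hδ1 ha0 hpos hrec
  set N := Nat.floor (δ ^ (-(1 : ℝ) / q)) with hNdef
  have ha0nn : 0 ≤ a0 := ha0 ▸ hpos 0 (Nat.zero_le _)
  have hmaxeq : a0 ⊔ 0 = a0 := max_eq_left ha0nn
  have hC1 : a0 + 1 ≤ C := by rw [hCdef, hmaxeq]; nlinarith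
  have hC2 : B * q ^ q + 1 ≤ C := by rw [hCdef, hmaxeq]; nlinarith
  have hC4 : 4 * (a0 + 1) ≤ C := by rw [hCdef, hmaxeq]; nlinarith
  have hC0 : 0 ≤ C := by linarith
  have hvq1 : 1 ≤ v ^ (-q) := Real.one_le_rpow_of_pos_of_le_one_of_nonpos hv hv1 (by linarith)
  have hvq0 : 0 ≤ v ^ (-q) := by linarith
  -- δ ≤ m ^ (-q)
  have hδle : ∀ m : ℕ, 1 ≤ m → m ≤ N → δ ≤ (m:ℝ) ^ (-q) := by
    intro m h1m hmN
    have hm0 : (0:ℝ) < (m:ℝ) := by exact_mod_cast h1m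
    have h1 : (m:ℝ) ≤ δ ^ (-(1:ℝ)/q) := by
      calc (m:ℝ) ≤ (N:ℝ) := by exact_mod_cast hmN
      _ ≤ δ ^ (-(1:ℝ)/q) := Nat.floor_le (Real.rpow_nonneg hδ.le _)
    have h2 : (m:ℝ) ^ q ≤ (δ ^ (-(1:ℝ)/q)) ^ q := Real.rpow_le_rpow hm0.le h1 hq0.le
    have h3 : (δ ^ (-(1:ℝ)/q)) ^ q = δ⁻¹ := by
      rw [← Real.rpow_mul hδ.le]
      rw [show -(1:ℝ)/q * q = -1 by field_simp]
      exact Real.rpow_neg_one δ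
    rw [h3] at h2
    have hMq : 0 < (m:ℝ) ^ q := Real.rpow_pos_of_pos hm0 q
    rw [Real.rpow_neg hm0.le, inv_eq_one_div, le_div_iff₀ hMq]
    calc δ * (m:ℝ) ^ q ≤ δ * δ⁻¹ := by
          apply mul_le_mul_of_nonneg_left h2 hδ.le
    _ = 1 := by field_simp
  -- step inequality
  have hstep : ∀ m : ℕ, 1 ≤ m → m ≤ N → ∀ l : ℝ, 0 ≤ l → l ≤ 1 →
      a m ≤ a (m-1) - l * v * a (m-1) + B * l ^ q + δ := by
    intro m h1m hmN l hl0 hl1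
    have ham1 : 0 ≤ a (m-1) := hpos _ (le_trans (Nat.sub_le _ _) hmN)
    have hbdd : BddBelow ((fun l : ℝ => -(l * v * a (m - 1)) + B * l ^ q) '' Set.Icc (0:ℝ) 1) := by
      refine ⟨-(v * a (m-1)), ?_⟩
      rintro y ⟨l', ⟨hl'0, hl'1⟩, rfl⟩
      have h1 : l' * v * a (m-1) ≤ v * a (m-1) := by
        nlinarith [mul_nonneg (mul_nonneg (sub_nonneg.2 hl'1) hv.le) ham1]
      have h2 : 0 ≤ B * l' ^ q := mul_nonneg hB.le (Real.rpow_nonneg hl'0 _)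
      simp only
      linarith
    have hmem : -(l * v * a (m - 1)) + B * l ^ q ∈
        ((fun l : ℝ => -(l * v * a (m - 1)) + B * l ^ q) '' Set.Icc (0:ℝ) 1) :=
      Set.mem_image_of_mem _ ⟨hl0, hl1⟩
    have := csInf_le hbdd hmem
    have h := hrec m h1m hmN
    linarith
  -- trivial bound
  have htriv : ∀ m : ℕ, m ≤ N → a m ≤ a0 + m * δ := by
    intro m
    induction m with
    | zero => intro _; simp [ha0]
    | succ n ih =>
      intro hm
      have h := hstep (n+1) (Nat.le_add_left _ _) hm 0 le_rfl zero_le_one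
      rw [Real.zero_rpow (ne_of_gt hq0)] at h
      simp only [Nat.add_sub_cancel] at h
      have := ih (le_trans (Nat.le_succ n) hm)
      push_cast
      push_cast at this
      nlinarith
  have hub : ∀ m : ℕ, 1 ≤ m → m ≤ N → a m ≤ a0 + 1 := by
    intro m h1m hmN
    have hm0 : (0:ℝ) < (m:ℝ) := by exact_mod_cast h1m
    have h1 : (m:ℝ) * δ ≤ (m:ℝ) * (m:ℝ) ^ (-q) :=
      mul_le_mul_of_nonneg_left (hδle m h1m hmN) hm0.le
    have h2 : (m:ℝ) * (m:ℝ) ^ (-q) = (m:ℝ) ^ (1-q) := by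
      rw [show (m:ℝ) * (m:ℝ) ^ (-q) = (m:ℝ) ^ (1:ℝ) * (m:ℝ) ^ (-q) by rw [Real.rpow_one],
        ← Real.rpow_add hm0, show (1:ℝ) + -q = 1-q by ring]
    have h3 : (m:ℝ) ^ (1-q) ≤ 1 :=
      Real.rpow_le_one_of_one_le_of_nonpos (by exact_mod_cast h1m) (by linarith)
    have := htriv m hmN
    rw [h2] at h1
    linarith
  -- main induction
  intro m
  induction m using Nat.strong_induction_on with
  | _ m ih =>
    intro h1m hmN
    have hm0 : (0:ℝ) < (m:ℝ) := by exact_mod_cast h1m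
    have hmq : 0 < (m:ℝ) ^ (1-q) := Real.rpow_pos_of_pos hm0 _
    by_cases hcase : v * (m:ℝ) < q
    · -- small m case: trivial bound suffices
      have hm1 : (1:ℝ) ≤ (m:ℝ) := by exact_mod_cast h1m
      have hub' := hub m h1m hmN
      have hvlt : v ≤ q / (m:ℝ) := by rw [le_div_iff₀ hm0]; linarith
      have h1 : v ^ q ≤ (q / (m:ℝ)) ^ q := Real.rpow_le_rpow hv.le hvlt hq0.le
      have hqm : (q / (m:ℝ)) ^ q = q ^ q / (m:ℝ) ^ q := Real.div_rpow hq0.le hm0.le q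
      have hvqpos : 0 < v ^ q := Real.rpow_pos_of_pos hv q
      have hmqpos : 0 < (m:ℝ) ^ q := Real.rpow_pos_of_pos hm0 q
      have hqqpos : 0 < q ^ q := Real.rpow_pos_of_pos hq0 q
      have h2 : (m:ℝ) ^ q / q ^ q ≤ v ^ (-q) := by
        rw [Real.rpow_neg hv.le]
        rw [hqm] at h1
        have := inv_anti₀ hvqpos h1
        rwa [inv_div] at this
      have h5 : (m:ℝ) ^ q * (m:ℝ) ^ (1-q) = (m:ℝ) := by
        rw [← Real.rpow_add hm0, show q + (1-q) = 1 by ring, Real.rpow_one]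
      have h6 : (m:ℝ) ^ q / 4 ≤ v ^ (-q) := by
        refine le_trans ?_ h2
        exact div_le_div_of_nonneg_left hmqpos.le hqqpos hqq4
      have h7 : (m:ℝ) / 4 ≤ v ^ (-q) * (m:ℝ) ^ (1-q) := by
        calc (m:ℝ) / 4 = ((m:ℝ) ^ q / 4) * (m:ℝ) ^ (1-q) := by
              rw [div_mul_eq_mul_div, h5]
        _ ≤ v ^ (-q) * (m:ℝ) ^ (1-q) := mul_le_mul_of_nonneg_right h6 hmq.le
      have h8 : C * ((m:ℝ)/4) ≤ C * (v ^ (-q) * (m:ℝ) ^ (1-q)) :=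
        mul_le_mul_of_nonneg_left h7 hC0
      have h9 : C * (1/4 : ℝ) ≤ C * ((m:ℝ)/4) :=
        mul_le_mul_of_nonneg_left (by linarith) hC0
      nlinarith [h8, h9, hub', hC4]
    · -- main case : v * m ≥ q
      push_neg at hcase
      have hm1 : (1:ℝ) < (m:ℝ) := by
        have := mul_le_mul_of_nonneg_right hv1 hm0.le
        linarith
      have hM2 : (2:ℝ) ≤ (m:ℝ) := by
        have : 1 < m := by exact_mod_cast hm1
        exact_mod_cast this
      have hm2 : 2 ≤ m := by exact_mod_cast hM2
      have hvm : 0 < v * (m:ℝ) := mul_pos hv hm0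
      set lam := q / (v * (m:ℝ)) with hlamdef
      have hlam0 : 0 ≤ lam := div_nonneg hq0.le hvm.le
      have hlam1 : lam ≤ 1 := (div_le_one hvm).2 hcase
      have h := hstep m h1m hmN lam hlam0 hlam1
      have hlv : lam * v = q / (m:ℝ) := by
        rw [hlamdef, div_mul_eq_mul_div, mul_comm q v, mul_div_mul_left q (m:ℝ) (ne_of_gt hv)]
      have hIH := ih (m-1) (by omega) (by omega) (le_trans (Nat.sub_le _ _) hmN)
      rw [Nat.cast_sub h1m, Nat.cast_one] at hIH
      have h1qm : 0 ≤ 1 - q/(m:ℝ) := by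
        have h := (div_le_one hm0).2 (le_trans hq2 hM2)
        linarith
      have hA : a (m-1) * (1 - q/(m:ℝ)) ≤ C * v^(-q) * (((m:ℝ)-1)^(1-q) * (1 - q/(m:ℝ))) := by
        have := mul_le_mul_of_nonneg_right hIH h1qm
        nlinarith [this]
      have hlamq : lam ^ q = q^q * (v^(-q) * (m:ℝ)^(-q)) := by
        have e : lam ^ q = q^q / (v^q * (m:ℝ)^q) := by
          rw [hlamdef, Real.div_rpow hq0.le hvm.le, Real.mul_rpow hv.le hm0.le]
        rw [e, Real.rpow_neg hv.le, Real.rpow_neg hm0.le]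
        field_simp
      have hmqneg : 0 ≤ (m:ℝ)^(-q) := Real.rpow_nonneg hm0.le _
      have hδ2 : δ ≤ v^(-q) * (m:ℝ)^(-q) := by
        have h1 := hδle m h1m hmN
        nlinarith [mul_le_mul_of_nonneg_right hvq1 hmqneg]
      have hkey := key_aux q B C hq1 hq2 hB hC2 hC0 (m:ℝ) hM2
      have hk2 := mul_le_mul_of_nonneg_left hkey hvq0
      rw [hlv, hlamq] at h
      clear_value C N
      linarith [h, hA, hδ2, hk2]
end

section
/- Let $\rho : [0,1] \to [0,\infty)$ be a non-negative convex function with $\rho(u)/u \to 0$ as $u \to 0^+$, and let $\{\delta_k\}$ be a non-negative sequence with $\delta_k \to 0$. Suppose a non-negative sequence $\{a_k\}_{k=0}^\infty$ satisfies $a_m \le a_{m-1} + \inf_{0 \le \lambda \le 1}(-\lambda v a_{m-1} + B\rho(\lambda)) + \delta_{m-1}$ for all $m \ge 1$, with positive constants $v$ and $B$. Then $\lim_{m \to \infty} a_m = 0$. -/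
theorem stmt_8 (ρ : ℝ → ℝ) (hρnn : ∀ u ∈ Set.Icc (0 : ℝ) 1, 0 ≤ ρ u)
    (hρconv : ConvexOn ℝ (Set.Icc 0 1) ρ)
    (hρo : Filter.Tendsto (fun u => ρ u / u) (nhdsWithin 0 (Set.Ioi 0)) (nhds 0))
    (δ : ℕ → ℝ) (hδnn : ∀ k, 0 ≤ δ k) (hδ0 : Filter.Tendsto δ Filter.atTop (nhds 0))
    (v B : ℝ) (hv : 0 < v) (hB : 0 < B)
    (a : ℕ → ℝ) (hann : ∀ k, 0 ≤ a k)
    (hrec : ∀ m : ℕ, 1 ≤ m →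
      a m ≤ a (m - 1) +
        sInf ((fun l : ℝ => -(l * v * a (m - 1)) + B * ρ l) '' Set.Icc (0 : ℝ) 1) + δ (m - 1)) :
    Filter.Tendsto a Filter.atTop (nhds 0) := by
  rw [Metric.tendsto_atTop]
  intro ε hε
  set c : ℝ := v * ε / (2 * B) with hc_def
  have hc : 0 < c := by positivity
  obtain ⟨r, hr, hrρ⟩ := Metric.tendsto_nhdsWithin_nhds.mp hρo c hc
  set lam : ℝ := min (min (r / 2) 1) v⁻¹ with hlam_def
  have hlpos : 0 < lam := by
    apply lt_min (lt_min (by linarith) one_pos) (by positivity)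
  have hl1 : lam ≤ 1 := le_trans (min_le_left _ _) (min_le_right _ _)
  have hlr : lam < r := lt_of_le_of_lt (le_trans (min_le_left _ _) (min_le_left _ _)) (by linarith)
  have hlv : lam * v ≤ 1 := by
    have : lam ≤ v⁻¹ := min_le_right _ _
    calc lam * v ≤ v⁻¹ * v := by nlinarith
    _ = 1 := inv_mul_cancel₀ hv.ne'
  have hρl_nn : 0 ≤ ρ lam := hρnn lam ⟨hlpos.le, hl1⟩
  -- bound on B * ρ lam
  have hBρ : B * ρ lam ≤ lam * v * ε / 2 := by
    have := hrρ (Set.mem_Ioi.mpr hlpos) (by rw [Real.dist_eq]; rw [sub_zero, abs_of_pos hlpos]; exact hlr)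
    rw [Real.dist_eq, sub_zero, abs_of_nonneg (by positivity)] at this
    have h2 : ρ lam < c * lam := by
      have := (div_lt_iff₀ hlpos).mp this
      linarith
    have : B * ρ lam < B * (c * lam) := by nlinarith
    have hbc : B * (c * lam) = lam * v * ε / 2 := by
      field_simp [hc_def]; rw [hc_def]; field_simp
    linarith [hbc ▸ this]
  -- one-step bound
  have key : ∀ m : ℕ, a (m + 1) ≤ a m - lam * v * a m + B * ρ lam + δ m := by
    intro m
    have h := hrec (m + 1) (by omega)
    simp only [Nat.add_sub_cancel] at h
    have hb : BddBelow ((fun l : ℝ => -(l * v * a m) + B * ρ l) '' Set.Icc (0 : ℝ) 1) := by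
      refine ⟨-(v * a m), ?_⟩
      rintro y ⟨l, hl, rfl⟩
      have hρ := hρnn l hl
      have h1 := hl.1
      have h2 := hl.2
      have ha := hann m
      have : l * v * a m ≤ v * a m := by
        nlinarith [mul_nonneg (mul_nonneg (sub_nonneg.mpr h2) hv.le) ha]
      simp only [neg_add_le_iff_le_add]
      nlinarith [hB.le]
    have hmem : (fun l : ℝ => -(l * v * a m) + B * ρ l) lam ∈
        ((fun l : ℝ => -(l * v * a m) + B * ρ l) '' Set.Icc (0 : ℝ) 1) :=
      Set.mem_image_of_mem _ ⟨hlpos.le, hl1⟩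
    have := csInf_le hb hmem
    simp only at this
    linarith
  set d : ℝ := lam * v * ε / 4 with hd_def
  have hd : 0 < d := by positivity
  obtain ⟨N, hN⟩ := (Metric.tendsto_atTop.mp hδ0) d hd
  have hNδ : ∀ k, N ≤ k → δ k ≤ d := by
    intro k hk
    have := hN k hk
    rw [Real.dist_eq, sub_zero, abs_of_nonneg (hδnn k)] at this
    linarith
  -- there exists m₀ ≥ N with a m₀ < ε
  have habs : ∃ m₀, N ≤ m₀ ∧ a m₀ < ε := by
    by_contra hcon
    push_neg at hcon
    have hstep : ∀ k : ℕ, a (N + k) ≤ a N - k * d := by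
      intro k
      induction k with
      | zero => simp
      | succ k ih =>
        have hk := key (N + k)
        have hδk := hNδ (N + k) (by omega)
        have hak : ε ≤ a (N + k) := hcon _ (by omega)
        have hmul : lam * v * ε ≤ lam * v * a (N + k) := by nlinarith
        have : a (N + (k + 1)) ≤ a (N + k) - d := by
          have heq : N + (k + 1) = (N + k) + 1 := by omega
          rw [heq]
          rw [hd_def] at *
          linarith
        push_cast
        linarith
    obtain ⟨k, hk⟩ := exists_nat_gt (a N / d)
    have : a N < k * d := by
      have := (div_lt_iff₀ hd).mp hk
      linarith
    have h1 := hstep k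
    have h2 := hann (N + k)
    linarith
  obtain ⟨m₀, hm₀N, hm₀⟩ := habs
  -- a m < ε for all m ≥ m₀
  have hfinal : ∀ m, m₀ ≤ m → a m < ε := by
    intro m hm
    induction m, hm using Nat.le_induction with
    | base => exact hm₀
    | succ m hm ih =>
      have hk := key m
      have hδk := hNδ m (by omega)
      have ham := hann m
      have : a m - lam * v * a m ≤ ε - lam * v * ε := by nlinarith
      rw [hd_def] at hδk
      have hle : a (m + 1) ≤ ε - lam * v * ε / 4 := by linarith
      nlinarith
  refine ⟨m₀, fun n hn => ?_⟩
  rw [Real.dist_eq, sub_zero, abs_of_nonneg (hann n)]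
  exact hfinal n hn
end

section
/- Let $q \in (1,2]$, $v \in (0,1]$, $B > 0$, $c > 0$. Suppose a non-negative sequence $\{a_m\}_{m=0}^\infty$ satisfies for all $m \ge 1$: $a_m \le a_{m-1} + \inf_{0 \le \lambda \le 1}(-\lambda v a_{m-1} + B\lambda^q) + \delta_{m-1}$, where $0 \le \delta_{m-1} \le c\, m^{-q}$. Then $a_m \le C(q, v, B, a_0, c)\, m^{1-q}$ for all $m \ge 1$, with $C(q,v,B,a_0,c) \le C'(q,B,a_0,c)\, v^{-q}$. -/
open Real

lemma bern_up (p x : ℝ) (hp0 : 0 ≤ p) (hp1 : p ≤ 1) (hx : 1 ≤ x) :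
    (x+1) ^ p ≤ x ^ (p-1) * (x + p) := by
  have hx0 : (0:ℝ) < x := by linarith
  have h1 : x + 1 = x * (1 + 1/x) := by field_simp
  have h2 : (x+1)^p = x^p * (1+1/x)^p := by
    rw [h1, Real.mul_rpow hx0.le (by positivity)]
  have h3 : (1+1/x)^p ≤ 1 + p * (1/x) := by
    apply rpow_one_add_le_one_add_mul_self _ hp0 hp1
    have : (0:ℝ) < 1/x := by positivity
    linarith
  have h4 : x ^ (p-1) = x ^ p / x := by rw [Real.rpow_sub hx0, Real.rpow_one]
  have h5 : (0:ℝ) ≤ x ^ p := (Real.rpow_pos_of_pos hx0 p).le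
  calc (x+1)^p = x^p * (1+1/x)^p := h2
    _ ≤ x^p * (1 + p * (1/x)) := mul_le_mul_of_nonneg_left h3 h5
    _ = x ^ (p-1) * (x + p) := by
        rw [h4, div_mul_eq_mul_div, eq_div_iff (ne_of_gt hx0)]; field_simp

lemma bern_down (p x : ℝ) (hp0 : 0 ≤ p) (hp1 : p ≤ 1) (hx : 1 ≤ x) :
    (x-1) ^ p ≤ x ^ (p-1) * (x - p) := by
  have hx0 : (0:ℝ) < x := by linarith
  have hinv : 1/x ≤ 1 := by rw [div_le_one hx0]; exact hx
  have hinv0 : (0:ℝ) < 1/x := by positivity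
  have h1 : x - 1 = x * (1 + (-1/x)) := by field_simp; ring
  have hs : (-1:ℝ) ≤ -1/x := by
    have : (-1:ℝ)/x = -(1/x) := by ring
    rw [this]; linarith
  have h2 : (x-1)^p = x^p * (1+(-1/x))^p := by
    rw [h1, Real.mul_rpow hx0.le (by linarith)]
  have h3 : (1+(-1/x))^p ≤ 1 + p * (-1/x) :=
    rpow_one_add_le_one_add_mul_self hs hp0 hp1
  have h4 : x ^ (p-1) = x ^ p / x := by rw [Real.rpow_sub hx0, Real.rpow_one]
  have h5 : (0:ℝ) ≤ x ^ p := (Real.rpow_pos_of_pos hx0 p).le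
  calc (x-1)^p = x^p * (1+(-1/x))^p := h2
    _ ≤ x^p * (1 + p * (-1/x)) := mul_le_mul_of_nonneg_left h3 h5
    _ = x ^ (p-1) * (x - p) := by
        rw [h4, div_mul_eq_mul_div, eq_div_iff (ne_of_gt hx0)]; field_simp; ring

-- m^(1-q) - (m+1)^(1-q) ≤ (q-1) m^(-q)
lemma lemA (q x : ℝ) (hq1 : 1 < q) (hq2 : q ≤ 2) (hx : 1 ≤ x) :
    x ^ (1-q) - (x+1) ^ (1-q) ≤ (q-1) * x ^ (-q) := by
  have hx0 : (0:ℝ) < x := by linarith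
  have hy0 : (0:ℝ) < x + 1 := by linarith
  have hp0 : (0:ℝ) ≤ q - 1 := by linarith
  have hp1 : q - 1 ≤ 1 := by linarith
  have bern := bern_up (q-1) x hp0 hp1 hx
  have e1 : x ^ (1-q) - (q-1) * x ^ (-q) = x ^ (-q) * (x - (q-1)) := by
    rw [show (1-q) = (-q) + 1 by ring, Real.rpow_add hx0, Real.rpow_one]; ring
  have hxq : (0:ℝ) < x ^ (-q) := Real.rpow_pos_of_pos hx0 _
  have hxp : (0:ℝ) ≤ x - (q-1) := by linarith
  have key : (x ^ (-q) * (x - (q-1))) * (x+1) ^ (q-1) ≤ 1 := by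
    calc (x ^ (-q) * (x - (q-1))) * (x+1) ^ (q-1)
        ≤ (x ^ (-q) * (x - (q-1))) * (x ^ (q-1-1) * (x + (q-1))) :=
          mul_le_mul_of_nonneg_left bern (mul_nonneg hxq.le hxp)
      _ = (x ^ (-q) * x ^ (q-1-1)) * ((x - (q-1)) * (x + (q-1))) := by ring
      _ = x ^ (-q + (q-1-1)) * (x*x - (q-1)*(q-1)) := by
          rw [← Real.rpow_add hx0]; ring
      _ ≤ x ^ (-q + (q-1-1)) * (x*x) := by
          apply mul_le_mul_of_nonneg_left _ (Real.rpow_pos_of_pos hx0 _).le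
          nlinarith
      _ = x ^ (-q + (q-1-1) + 1 + 1) := by
          rw [Real.rpow_add_one (ne_of_gt hx0), Real.rpow_add_one (ne_of_gt hx0)]; ring
      _ = 1 := by rw [show -q + (q-1-1) + 1 + 1 = 0 by ring, Real.rpow_zero]
  have hP : (0:ℝ) < (x+1) ^ (q-1) := Real.rpow_pos_of_pos hy0 _
  have h6 : x ^ (-q) * (x - (q-1)) ≤ 1 / (x+1) ^ (q-1) := (le_div_iff₀ hP).mpr key
  have e2 : 1 / (x+1) ^ (q-1) = (x+1) ^ (1-q) := by
    rw [one_div, ← Real.rpow_neg hy0.le, show -(q-1) = 1-q by ring]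
  rw [e2] at h6
  linarith [e1 ▸ h6]

-- (q-1) (x+1)^(-q) ≤ x^(1-q) - (x+1)^(1-q)
lemma lemB (q x : ℝ) (hq1 : 1 < q) (hq2 : q ≤ 2) (hx : 1 ≤ x) :
    (q-1) * (x+1) ^ (-q) ≤ x ^ (1-q) - (x+1) ^ (1-q) := by
  have hx0 : (0:ℝ) < x := by linarith
  have hy1 : (1:ℝ) ≤ x + 1 := by linarith
  have hy0 : (0:ℝ) < x + 1 := by linarith
  have hp0 : (0:ℝ) ≤ q - 1 := by linarith
  have hp1 : q - 1 ≤ 1 := by linarith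
  have bern := bern_down (q-1) (x+1) hp0 hp1 hy1
  rw [show x + 1 - 1 = x by ring] at bern
  have hyq : (0:ℝ) < (x+1) ^ (-q) := Real.rpow_pos_of_pos hy0 _
  have hyp : (0:ℝ) ≤ (x+1) + (q-1) := by linarith
  have key : ((x+1) ^ (-q) * ((x+1) + (q-1))) * x ^ (q-1) ≤ 1 := by
    calc ((x+1) ^ (-q) * ((x+1) + (q-1))) * x ^ (q-1)
        ≤ ((x+1) ^ (-q) * ((x+1) + (q-1))) * ((x+1) ^ (q-1-1) * ((x+1) - (q-1))) :=
          mul_le_mul_of_nonneg_left bern (mul_nonneg hyq.le hyp)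
      _ = ((x+1) ^ (-q) * (x+1) ^ (q-1-1)) * (((x+1) - (q-1)) * ((x+1) + (q-1))) := by ring
      _ = (x+1) ^ (-q + (q-1-1)) * ((x+1)*(x+1) - (q-1)*(q-1)) := by
          rw [← Real.rpow_add hy0]; ring
      _ ≤ (x+1) ^ (-q + (q-1-1)) * ((x+1)*(x+1)) := by
          apply mul_le_mul_of_nonneg_left _ (Real.rpow_pos_of_pos hy0 _).le
          nlinarith
      _ = (x+1) ^ (-q + (q-1-1) + 1 + 1) := by
          rw [Real.rpow_add_one (ne_of_gt hy0), Real.rpow_add_one (ne_of_gt hy0)]; ring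
      _ = 1 := by rw [show -q + (q-1-1) + 1 + 1 = 0 by ring, Real.rpow_zero]
  have hP : (0:ℝ) < x ^ (q-1) := Real.rpow_pos_of_pos hx0 _
  have h6 : (x+1) ^ (-q) * ((x+1) + (q-1)) ≤ 1 / x ^ (q-1) := (le_div_iff₀ hP).mpr key
  have e2 : 1 / x ^ (q-1) = x ^ (1-q) := by
    rw [one_div, ← Real.rpow_neg hx0.le, show -(q-1) = 1-q by ring]
  rw [e2] at h6
  have e1 : (x+1) ^ (-q) * ((x+1) + (q-1)) = (x+1) ^ (1-q) + (q-1) * (x+1)^(-q) := by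
    rw [show (1-q) = (-q) + 1 by ring, Real.rpow_add hy0, Real.rpow_one]; ring
  linarith [e1 ▸ h6]

set_option maxHeartbeats 1000000 in
theorem stmt_9 (q B a0 c : ℝ) (hq1 : 1 < q) (hq2 : q ≤ 2) (hB : 0 < B) (hc : 0 < c) :
    ∃ C' : ℝ, 0 < C' ∧
      ∀ (v : ℝ) (δ : ℕ → ℝ) (a : ℕ → ℝ), 0 < v → v ≤ 1 →
      a 0 = a0 →
      (∀ k, 0 ≤ δ k) →
      (∀ m : ℕ, 1 ≤ m → δ (m - 1) ≤ c * (m : ℝ) ^ (-q)) →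
      (∀ m, 0 ≤ a m) →
      (∀ m : ℕ, 1 ≤ m →
        a m ≤ a (m - 1) +
          sInf ((fun l : ℝ => -(l * v * a (m - 1)) + B * l ^ q) '' Set.Icc (0 : ℝ) 1) +
          δ (m - 1)) →
      ∀ m : ℕ, 1 ≤ m → a m ≤ C' * v ^ (-q) * (m : ℝ) ^ (1 - q) := by
  have hq0 : (0:ℝ) < q := by linarith
  have hqm1 : (0:ℝ) < q - 1 := by linarith
  have hqq : (0:ℝ) < q ^ q := Real.rpow_pos_of_pos hq0 q
  have hdiv : (0:ℝ) < c / (q-1) := div_pos hc hqm1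
  have hCpos : 0 < 2*q*(|a0| + c + c/(q-1)) + B*q^q + c := by
    have h1 : 0 < 2*q*(|a0| + c + c/(q-1)) :=
      mul_pos (by linarith) (by nlinarith [abs_nonneg a0])
    nlinarith
  refine ⟨2*q*(|a0| + c + c/(q-1)) + B*q^q + c, hCpos, ?_⟩
  intro v δ a hv0 hv1 ha0 hδnn hδ hann hrec
  set C' := 2*q*(|a0| + c + c/(q-1)) + B*q^q + c with hCdef
  clear_value C'
  have ha0nn : 0 ≤ a0 := ha0 ▸ hann 0
  have habs : |a0| = a0 := abs_of_nonneg ha0nn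
  have hC'B : B*q^q + c ≤ C' := by
    have h1 : 0 ≤ 2*q*(|a0| + c + c/(q-1)) :=
      le_of_lt (mul_pos (by linarith) (by nlinarith [abs_nonneg a0]))
    rw [hCdef]; linarith
  have hC'A : (a0 + c + c/(q-1)) * (2*q) ≤ C' := by
    rw [hCdef]; nlinarith [le_abs_self a0]
  have hvq0 : (0:ℝ) < v ^ (-q) := Real.rpow_pos_of_pos hv0 _
  have hvq1 : (1:ℝ) ≤ v ^ (-q) :=
    Real.one_le_rpow_of_pos_of_le_one_of_nonpos hv0 hv1 (by linarith)
  -- sInf is at most the value at any l in [0,1]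
  have hInf_le : ∀ (n : ℕ) (l : ℝ), l ∈ Set.Icc (0:ℝ) 1 →
      sInf ((fun l : ℝ => -(l * v * a n) + B * l ^ q) '' Set.Icc (0 : ℝ) 1)
        ≤ -(l * v * a n) + B * l ^ q := by
    intro n l hl
    apply csInf_le
    · refine ⟨-(a n), ?_⟩
      rintro y ⟨l', hl', rfl⟩
      have h1 : 0 ≤ B * l' ^ q := mul_nonneg hB.le (Real.rpow_nonneg hl'.1 q)
      have hlv : l' * v ≤ 1 := mul_le_one₀ hl'.2 hv0.le hv1
      have h2 : l' * v * a n ≤ a n := by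
        have := mul_le_mul_of_nonneg_right hlv (hann n)
        linarith [this]
      simp only
      linarith
    · exact Set.mem_image_of_mem _ hl
  have hstep : ∀ (m : ℕ), 1 ≤ m → ∀ l : ℝ, 0 ≤ l → l ≤ 1 →
      a m ≤ (1 - l*v) * a (m-1) + B * l ^ q + δ (m-1) := by
    intro m hm l h0 h1
    have h2 := hrec m hm
    have h3 := hInf_le (m-1) l ⟨h0, h1⟩
    have e : (1 - l*v) * a (m-1) = a (m-1) - l*v*a (m-1) := by ring
    nlinarith [h2, h3, e]
  -- crude uniform bound
  have hcrude : ∀ m : ℕ, 1 ≤ m →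
      a m + (c/(q-1)) * (m:ℝ)^(1-q) ≤ a0 + c + c/(q-1) := by
    intro m hm
    induction m, hm using Nat.le_induction with
    | base =>
      have h := hstep 1 le_rfl 0 le_rfl zero_le_one
      have e : (1 - 0*v) * a (1-1) + B * (0:ℝ)^q + δ (1-1) = a 0 + δ 0 := by
        rw [Real.zero_rpow (ne_of_gt hq0)]; norm_num
      have hδ1 := hδ 1 le_rfl
      simp only [Nat.cast_one, Real.one_rpow, mul_one] at hδ1 ⊢
      rw [e] at h
      simp only [Nat.sub_self] at h hδ1
      linarith [h, hδ1, ha0 ▸ le_refl (a 0)]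
    | succ m hm ih =>
      have hm1 : (1:ℝ) ≤ (m:ℝ) := by exact_mod_cast hm
      have h := hstep (m+1) (by omega) 0 le_rfl zero_le_one
      simp only [Nat.add_sub_cancel] at h
      have e : (1 - 0*v) * a m + B * (0:ℝ)^q + δ m = a m + δ m := by
        rw [Real.zero_rpow (ne_of_gt hq0)]; norm_num
      rw [e] at h
      have hδm := hδ (m+1) (by omega)
      simp only [Nat.add_sub_cancel] at hδm
      push_cast at hδm
      have hlemB := lemB q (m:ℝ) hq1 hq2 hm1
      have h3 := mul_le_mul_of_nonneg_left hlemB hdiv.le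
      have e2 : (c/(q-1)) * ((q-1) * ((m:ℝ)+1)^(-q)) = c * ((m:ℝ)+1)^(-q) := by
        field_simp
      have e3 : (c/(q-1)) * ((m:ℝ)^(1-q) - ((m:ℝ)+1)^(1-q))
          = (c/(q-1)) * (m:ℝ)^(1-q) - (c/(q-1)) * ((m:ℝ)+1)^(1-q) := by ring
      push_cast
      linarith [h, hδm, h3, e2, e3, ih]
  -- small regime
  have hsmall : ∀ m : ℕ, 1 ≤ m → (m:ℝ) * v ≤ 2*q →
      a m ≤ C' * v^(-q) * (m:ℝ)^(1-q) := by
    intro m hm hmv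
    have hm1 : (1:ℝ) ≤ (m:ℝ) := by exact_mod_cast hm
    have hm0 : (0:ℝ) < (m:ℝ) := by linarith
    have hA : a m ≤ a0 + c + c/(q-1) := by
      have h0 : 0 ≤ (c/(q-1)) * (m:ℝ)^(1-q) :=
        mul_nonneg hdiv.le (Real.rpow_nonneg hm0.le _)
      linarith [hcrude m hm]
    have h1 : (m:ℝ)^(q-1) ≤ 2*q/v := by
      calc (m:ℝ)^(q-1) ≤ (m:ℝ)^(1:ℝ) := Real.rpow_le_rpow_of_exponent_le hm1 (by linarith)
        _ = (m:ℝ) := Real.rpow_one _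
        _ ≤ 2*q/v := by rw [le_div_iff₀ hv0]; linarith
    have hmq : (0:ℝ) < (m:ℝ)^(q-1) := Real.rpow_pos_of_pos hm0 _
    have h2 : v/(2*q) ≤ (m:ℝ)^(1-q) := by
      have e : (m:ℝ)^(1-q) = ((m:ℝ)^(q-1))⁻¹ := by
        rw [show (1:ℝ)-q = -(q-1) by ring, Real.rpow_neg hm0.le]
      have h3 : (2*q/v)⁻¹ ≤ ((m:ℝ)^(q-1))⁻¹ := by
        apply inv_anti₀ hmq h1
      rw [e]
      calc v/(2*q) = (2*q/v)⁻¹ := by rw [inv_div]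
        _ ≤ ((m:ℝ)^(q-1))⁻¹ := h3
    have h4 : C' * v^(-q) * (v/(2*q)) ≤ C' * v^(-q) * (m:ℝ)^(1-q) :=
      mul_le_mul_of_nonneg_left h2 (mul_nonneg hCpos.le hvq0.le)
    have e4 : v^(-q) * v = v^(1-q) := by
      rw [← Real.rpow_add_one (ne_of_gt hv0), show -q+1 = 1-q by ring]
    have hv1q : (1:ℝ) ≤ v^(1-q) :=
      Real.one_le_rpow_of_pos_of_le_one_of_nonpos hv0 hv1 (by linarith)
    have e5 : C' * v^(-q) * (v/(2*q)) = (C'/(2*q)) * (v^(-q) * v) := by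
      field_simp
    have h5 : (a0 + c + c/(q-1)) ≤ C' * v^(-q) * (v/(2*q)) := by
      rw [e5, e4]
      have h6 : (C'/(2*q)) * 1 ≤ (C'/(2*q)) * v^(1-q) :=
        mul_le_mul_of_nonneg_left hv1q (div_pos hCpos (by linarith)).le
      have h7 : (a0 + c + c/(q-1)) ≤ C'/(2*q) := by
        rw [le_div_iff₀ (by linarith : (0:ℝ) < 2*q)]
        linarith [hC'A]
      linarith
    linarith [hA, h5, h4]
  -- main induction
  intro m hm
  induction m, hm using Nat.le_induction with
  | base =>
    apply hsmall 1 le_rfl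
    push_cast
    linarith
  | succ m hm ih =>
    by_cases hcase : q ≤ (m:ℝ)*v
    · -- main analytic step
      have hm1 : (1:ℝ) ≤ (m:ℝ) := by exact_mod_cast hm
      have hm0 : (0:ℝ) < (m:ℝ) := by linarith
      have hvm : (0:ℝ) < v*(m:ℝ) := mul_pos hv0 hm0
      set l := q/(v*(m:ℝ)) with hldef
      clear_value l
      have hl0 : 0 ≤ l := by rw [hldef]; positivity
      have hl1 : l ≤ 1 := by rw [hldef, div_le_one hvm]; linarith
      have h := hstep (m+1) (by omega) l hl0 hl1
      simp only [Nat.add_sub_cancel] at h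
      have hlv : l*v = q/(m:ℝ) := by
        rw [hldef]; field_simp
      have hlq : l^q = q^q * (v^(-q) * (m:ℝ)^(-q)) := by
        rw [hldef, Real.div_rpow hq0.le hvm.le, Real.mul_rpow hv0.le hm0.le,
          Real.rpow_neg hv0.le, Real.rpow_neg hm0.le]
        ring
      have hqlem : q ≤ (m:ℝ) := by nlinarith
      have h1q : 0 ≤ 1 - l*v := by
        rw [hlv, sub_nonneg, div_le_one hm0]; exact hqlem
      have hmul := mul_le_mul_of_nonneg_left ih h1q
      have em : (m:ℝ)^(1-q) = (m:ℝ)^(-q) * (m:ℝ) := by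
        rw [show (1:ℝ)-q = -q+1 by ring, Real.rpow_add_one (ne_of_gt hm0)]
      have e6 : (1 - l*v) * (C' * v^(-q) * (m:ℝ)^(1-q))
          = C' * v^(-q) * (m:ℝ)^(1-q) - C' * q * (v^(-q) * (m:ℝ)^(-q)) := by
        rw [hlv, em]; field_simp
      have hδm := hδ (m+1) (by omega)
      simp only [Nat.add_sub_cancel] at hδm
      push_cast at hδm
      have hX0 : (0:ℝ) ≤ (m:ℝ)^(-q) := (Real.rpow_pos_of_pos hm0 _).le
      have hmono : ((m:ℝ)+1)^(-q) ≤ (m:ℝ)^(-q) := by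
        have hmq : (m:ℝ)^q ≤ ((m:ℝ)+1)^q :=
          Real.rpow_le_rpow hm0.le (by linarith) hq0.le
        rw [Real.rpow_neg hm0.le, Real.rpow_neg (by linarith : (0:ℝ) ≤ (m:ℝ)+1)]
        exact inv_anti₀ (Real.rpow_pos_of_pos hm0 _) hmq
      have hlemA := lemA q (m:ℝ) hq1 hq2 hm1
      have hK : 0 ≤ C' * v^(-q) := mul_nonneg hCpos.le hvq0.le
      have h8 := mul_le_mul_of_nonneg_left hlemA hK
      have hVX : (0:ℝ) ≤ v^(-q) * (m:ℝ)^(-q) := mul_nonneg hvq0.le hX0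
      have hfin : (B*q^q + c - C') * (v^(-q) * (m:ℝ)^(-q)) ≤ 0 :=
        mul_nonpos_of_nonpos_of_nonneg (by linarith) hVX
      have h7 : c * (m:ℝ)^(-q) ≤ c * (v^(-q) * (m:ℝ)^(-q)) := by
        have h7a := mul_le_mul_of_nonneg_left hvq1 (mul_nonneg hc.le hX0)
        linarith [h7a]
      have hmono' := mul_le_mul_of_nonneg_left hmono hc.le
      have hlq' : B * l^q = B * (q^q * (v^(-q) * (m:ℝ)^(-q))) := by rw [hlq]
      push_cast
      linarith [h, hmul, e6, hlq', hδm, hmono', h7, hfin, h8]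
    · -- still in small regime
      apply hsmall (m+1) (by omega)
      push_cast
      push_neg at hcase
      nlinarith [hv1, hq1, hcase]
end

section
/- Let $q \in (1,2]$, $p = q/(q-1)$, $w \in (0,1]$, $c > 0$. Assume $\{\delta_k\}_{k=0}^\infty$ satisfies $0 \le \delta_k \le c(k+1)^{-q}$ and a non-negative sequence $\{a_k\}_{k=0}^\infty$ satisfies $a_m \le a_{m-1} - w a_{m-1}^p + \delta_{m-1}$ for all $m \ge 1$. Then $a_m \le C(q,c,w,a_0)\, m^{1-q}$ for all $m \ge 1$, where $C(q,c,w,a_0) \le C'(q,c,a_0)\, w^{-1/(p-1)}$. -/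
open Real Set

private lemma gcont (p w : ℝ) (hp : 1 < p) :
    Continuous (fun x : ℝ => x - w * x ^ p) := by
  have h : Continuous (fun x : ℝ => x ^ p) :=
    continuous_iff_continuousAt.2 fun x =>
      Real.continuousAt_rpow_const x p (Or.inr (by linarith))
  exact continuous_id.sub (continuous_const.mul h)

private lemma gderiv (p w x : ℝ) (hx : x ≠ 0) :
    HasDerivAt (fun x : ℝ => x - w * x ^ p) (1 - w * (p * x ^ (p - 1))) x := by
  have h1 : HasDerivAt (fun x : ℝ => x ^ p) (p * x ^ (p - 1)) x :=
    Real.hasDerivAt_rpow_const (Or.inl hx)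
  exact (hasDerivAt_id' x).sub (h1.const_mul w)

private lemma gmono (p w T : ℝ) (hp : 1 < p) (hw : 0 < w) (hT : 0 < T)
    (hcond : w * (p * T ^ (p - 1)) ≤ 1) :
    ∀ x y : ℝ, 0 ≤ x → x ≤ y → y ≤ T → x - w * x ^ p ≤ y - w * y ^ p := by
  have hmono : MonotoneOn (fun x : ℝ => x - w * x ^ p) (Icc 0 T) := by
    apply monotoneOn_of_deriv_nonneg (convex_Icc 0 T) (gcont p w hp).continuousOn
    · intro x hx
      rw [interior_Icc] at hx
      exact (gderiv p w x (ne_of_gt hx.1)).differentiableAt.differentiableWithinAt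
    · intro x hx
      rw [interior_Icc] at hx
      rw [(gderiv p w x (ne_of_gt hx.1)).deriv]
      have h1 : x ^ (p - 1) ≤ T ^ (p - 1) :=
        Real.rpow_le_rpow hx.1.le hx.2.le (by linarith)
      have h2 : w * (p * x ^ (p - 1)) ≤ w * (p * T ^ (p - 1)) := by
        apply mul_le_mul_of_nonneg_left _ hw.le
        exact mul_le_mul_of_nonneg_left h1 (by linarith)
      linarith
  intro x y hx hxy hyT
  exact hmono ⟨hx, by linarith⟩ ⟨by linarith, hyT⟩ hxy

private lemma ganti (p w T : ℝ) (hp : 1 < p) (hw : 0 < w) (hT : 0 < T)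
    (hcond : 1 ≤ w * (p * T ^ (p - 1))) :
    ∀ x : ℝ, T ≤ x → x - w * x ^ p ≤ T - w * T ^ p := by
  have hanti : AntitoneOn (fun x : ℝ => x - w * x ^ p) (Ici T) := by
    apply antitoneOn_of_deriv_nonpos (convex_Ici T) (gcont p w hp).continuousOn
    · intro x hx
      rw [interior_Ici] at hx
      exact (gderiv p w x (ne_of_gt (lt_trans hT hx))).differentiableAt.differentiableWithinAt
    · intro x hx
      rw [interior_Ici] at hx
      have hx0 : 0 < x := lt_trans hT hx
      rw [(gderiv p w x (ne_of_gt hx0)).deriv]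
      have h1 : T ^ (p - 1) ≤ x ^ (p - 1) :=
        Real.rpow_le_rpow hT.le hx.le (by linarith)
      have h2 : w * (p * T ^ (p - 1)) ≤ w * (p * x ^ (p - 1)) := by
        apply mul_le_mul_of_nonneg_left _ hw.le
        exact mul_le_mul_of_nonneg_left h1 (by linarith)
      linarith
  intro x hx
  exact hanti Set.self_mem_Ici hx hx

private lemma bern (q x : ℝ) (hq1 : 1 < q) (hq2 : q ≤ 2) (hx : 1 ≤ x) :
    x ^ (1 - q) - (q - 1) * x ^ (-q) ≤ (x + 1) ^ (1 - q) := by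
  have hx0 : (0 : ℝ) < x := by linarith
  have key : (1 + 1 / x) ^ (q - 1) ≤ 1 + (q - 1) * (1 / x) :=
    rpow_one_add_le_one_add_mul_self (le_trans (by norm_num : (-1:ℝ) ≤ 0) (by positivity)) (by linarith) (by linarith)
  have hA : (0 : ℝ) < x ^ (q - 1) := Real.rpow_pos_of_pos hx0 _
  have hB : (0 : ℝ) < (x + 1) ^ (q - 1) := Real.rpow_pos_of_pos (by linarith) _
  have hmul : (x + 1) ^ (q - 1) = x ^ (q - 1) * (1 + 1 / x) ^ (q - 1) := by
    rw [← Real.mul_rpow hx0.le (by positivity)]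
    congr 1
    field_simp
  have hkey2 : (x + 1) ^ (q - 1) ≤ x ^ (q - 1) * (1 + (q - 1) * (1 / x)) := by
    rw [hmul]
    exact mul_le_mul_of_nonneg_left key hA.le
  have h1q : x ^ (1 - q) = (x ^ (q - 1))⁻¹ := by
    rw [show (1 - q) = -(q - 1) by ring, Real.rpow_neg hx0.le]
  have h1q' : (x + 1) ^ (1 - q) = ((x + 1) ^ (q - 1))⁻¹ := by
    rw [show (1 - q) = -(q - 1) by ring, Real.rpow_neg (by linarith)]
  have hmq : x ^ (-q) = (x ^ (q - 1))⁻¹ * x⁻¹ := by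
    rw [show (-q) = -(q - 1) + (-1) by ring, Real.rpow_add hx0, Real.rpow_neg hx0.le,
      Real.rpow_neg_one]
  rw [h1q, h1q', hmq]
  set A := x ^ (q - 1)
  set B := (x + 1) ^ (q - 1)
  set t := (q - 1) * (1 / x) with ht
  have ht0 : 0 ≤ t := mul_nonneg (by linarith) (by positivity)
  have ht1 : t ≤ 1 := by
    rw [ht]
    rw [mul_one_div, div_le_one hx0]
    linarith
  -- goal : A⁻¹ - (q-1) * (A⁻¹ * x⁻¹) ≤ B⁻¹,  i.e. A⁻¹ * (1 - t) ≤ B⁻¹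
  have hgoal : A⁻¹ * (1 - t) ≤ B⁻¹ := by
    have hBt : B * (1 - t) ≤ A := by
      nlinarith [mul_nonneg (sub_nonneg.2 hkey2) (sub_nonneg.2 ht1),
        mul_nonneg (mul_nonneg hA.le ht0) ht0]
    have h3 := mul_le_mul_of_nonneg_left hBt
      (mul_nonneg (inv_nonneg.2 hA.le) (inv_nonneg.2 hB.le))
    calc A⁻¹ * (1 - t) = A⁻¹ * B⁻¹ * (B * (1 - t)) := by
          field_simp
      _ ≤ A⁻¹ * B⁻¹ * A := h3
      _ = B⁻¹ := by field_simp
  have hx' : (q - 1) * (A⁻¹ * x⁻¹) = A⁻¹ * t := by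
    rw [ht]; field_simp
  rw [hx']
  linarith [hgoal]

set_option maxHeartbeats 1000000 in
theorem stmt_10 (q p a0 c : ℝ) (hq1 : 1 < q) (hq2 : q ≤ 2) (hp : p = q / (q - 1))
    (hc : 0 < c) :
    ∃ C' : ℝ, 0 < C' ∧
      ∀ (w : ℝ) (δ : ℕ → ℝ) (a : ℕ → ℝ), 0 < w → w ≤ 1 →
      a 0 = a0 →
      (∀ k, 0 ≤ δ k) →
      (∀ k : ℕ, δ k ≤ c * ((k : ℝ) + 1) ^ (-q)) →
      (∀ m, 0 ≤ a m) →
      (∀ m : ℕ, 1 ≤ m → a m ≤ a (m - 1) - w * a (m - 1) ^ p + δ (m - 1)) →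
      ∀ m : ℕ, 1 ≤ m → a m ≤ C' * w ^ (-(1 / (p - 1))) * (m : ℝ) ^ (1 - q) := by
  have hq0 : (0:ℝ) < q - 1 := by linarith
  have hqpos : (0:ℝ) < q := by linarith
  have hp1 : 1 < p := by rw [hp, lt_div_iff₀ hq0]; linarith
  have hp2 : 2 ≤ p := by rw [hp, le_div_iff₀ hq0]; linarith
  have hppos : (0:ℝ) < p := by linarith
  have hpq : p * (q - 1) = q := by rw [hp]; field_simp
  have hpm : p - 1 = 1 / (q - 1) := by rw [hp]; field_simp; ring
  have hinv : -(1 / (p - 1)) = 1 - q := by rw [hpm, one_div_one_div]; ring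
  set m1 : ℕ := max 8 (⌈(2*c)^(1/q) * p⌉₊ + 1) with hm1def
  have hm1_8 : (8:ℕ) ≤ m1 := le_max_left _ _
  have hm1_1 : (1:ℕ) ≤ m1 := le_trans (by norm_num) hm1_8
  have hm1R1 : (1:ℝ) ≤ (m1:ℝ) := by exact_mod_cast hm1_1
  have hm1M : (2*c)^(1/q) * p ≤ (m1:ℝ) := by
    have h1 : ((2*c)^(1/q) * p) ≤ (⌈(2*c)^(1/q) * p⌉₊ : ℝ) := Nat.le_ceil _
    have h2 : (⌈(2*c)^(1/q) * p⌉₊ : ℕ) + 1 ≤ m1 := le_max_right _ _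
    have h3 : ((⌈(2*c)^(1/q) * p⌉₊ : ℕ) : ℝ) ≤ (m1:ℝ) := by exact_mod_cast le_trans (Nat.le_succ _) h2
    linarith
  have hm1q : 2*c*p^q ≤ (m1:ℝ)^q := by
    have h0 : (0:ℝ) ≤ (2*c)^(1/q) * p := by positivity
    have h1 := Real.rpow_le_rpow h0 hm1M (le_of_lt hqpos)
    rwa [Real.mul_rpow (by positivity) hppos.le, ← Real.rpow_mul (by positivity),
      one_div_mul_cancel (ne_of_gt hqpos), Real.rpow_one] at h1
  have hm1rge1 : (1:ℝ) ≤ (m1:ℝ)^(q-1) := Real.one_le_rpow hm1R1 (by linarith)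
  have hC'pos : 0 < (1+c) * (m1:ℝ)^(q-1) := by positivity
  have hC'1 : 1 + c ≤ (1+c) * (m1:ℝ)^(q-1) := by nlinarith
  set C' : ℝ := (1+c) * (m1:ℝ)^(q-1) with hC'def
  refine ⟨C', hC'pos, ?_⟩
  intro w δ a hw hw1 ha0eq hδ0 hδc ha hrec
  simp only [hinv]
  have hw1q : (1:ℝ) ≤ w^(1-q) :=
    Real.one_le_rpow_of_pos_of_le_one_of_nonpos hw hw1 (by linarith)
  have hwq_pos : 0 < w^(1-q) := Real.rpow_pos_of_pos hw _
  set B : ℝ := C' * w^(1-q) with hBdef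
  have hBpos : 0 < B := mul_pos hC'pos hwq_pos
  set T : ℝ := (p*w)^(1-q) with hTdef
  have hpw : 0 < p*w := mul_pos hppos hw
  have hTpos : 0 < T := Real.rpow_pos_of_pos hpw _
  have hTp1 : T ^ (p-1) = (p*w)⁻¹ := by
    rw [hTdef, ← Real.rpow_mul hpw.le,
      show (1-q)*(p-1) = -1 by linear_combination -hpq, Real.rpow_neg_one]
  have hcond : w * (p * T^(p-1)) = 1 := by
    rw [hTp1]; field_simp
  have hTpow : T^p = T * (p*w)⁻¹ := by
    conv_lhs => rw [show p = 1 + (p-1) by ring]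
    rw [Real.rpow_add hTpos, Real.rpow_one, hTp1]
  have hTp : w * T^p = T/p := by
    rw [hTpow]; field_simp
  have hgmax : ∀ x:ℝ, 0 ≤ x → x - w*x^p ≤ T - T/p := by
    intro x hx
    rcases le_total x T with h | h
    · have h2 := gmono p w T hp1 hw hTpos (le_of_eq hcond) x T hx h le_rfl
      rw [hTp] at h2; exact h2
    · have h2 := ganti p w T hp1 hw hTpos hcond.ge x h
      rw [hTp] at h2; exact h2
  have hkeyδ : ∀ n:ℕ, m1 ≤ n → c * (n:ℝ)^(-q) ≤ T/(2*p) := by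
    intro n hn
    have hnR : (m1:ℝ) ≤ (n:ℝ) := by exact_mod_cast hn
    have hn1 : (1:ℝ) ≤ (n:ℝ) := le_trans hm1R1 hnR
    have hnqpos : (0:ℝ) < (n:ℝ)^q := Real.rpow_pos_of_pos (by linarith) _
    have hnq : 2*c*p^q ≤ (n:ℝ)^q :=
      le_trans hm1q (Real.rpow_le_rpow (by positivity) hnR hqpos.le)
    have hTlow : p^(1-q) ≤ T := by
      rw [hTdef]
      exact Real.rpow_le_rpow_of_nonpos hpw (by nlinarith) (by linarith)
    have hpsplit : p^(1-q) = p * p^(-q) := by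
      rw [show (1-q) = 1 + (-q) by ring, Real.rpow_add hppos, Real.rpow_one]
    have hpqpos : (0:ℝ) < p^q := Real.rpow_pos_of_pos hppos _
    have h1 : c * (n:ℝ)^(-q) ≤ p^(-q)/2 := by
      rw [Real.rpow_neg (by linarith : (0:ℝ) ≤ (n:ℝ)), Real.rpow_neg hppos.le,
        ← div_eq_mul_inv, inv_eq_one_div, div_div, div_le_div_iff₀ hnqpos (by positivity)]
      nlinarith
    have h3 : p^(-q)/2 ≤ T/(2*p) := by
      rw [div_le_div_iff₀ (by norm_num : (0:ℝ) < 2) (by positivity)]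
      nlinarith [Real.rpow_pos_of_pos hppos (-q)]
    linarith
  have hδ_le : ∀ n:ℕ, m1 ≤ n + 1 → δ n ≤ T/(2*p) := by
    intro n hn
    have h1 := hδc n
    have h2 := hkeyδ (n+1) hn
    push_cast at h2
    linarith
  have hTle : T/(2*p) ≤ T/p := by
    rw [div_le_div_iff₀ (by positivity) hppos]
    nlinarith
  have hstep : ∀ m:ℕ, 1 ≤ m → a m ≤ (T - T/p) + δ (m-1) := by
    intro m hm
    have h := hrec m hm
    have h2 := hgmax (a (m-1)) (ha (m-1))
    linarith
  have hTw : T ≤ w^(1-q) := by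
    rw [hTdef]
    exact Real.rpow_le_rpow_of_nonpos hw (by nlinarith) (by linarith)
  have hBm1 : ∀ n:ℕ, 1 ≤ n → (n:ℝ) ≤ (m1:ℝ) → (1+c) * w^(1-q) ≤ B * (n:ℝ)^(1-q) := by
    intro n hn1 hnm
    have hnpos : (0:ℝ) < (n:ℝ) := by exact_mod_cast hn1
    have h1 : (n:ℝ)^(q-1) ≤ (m1:ℝ)^(q-1) := Real.rpow_le_rpow hnpos.le hnm (by linarith)
    have hnpow : (0:ℝ) < (n:ℝ)^(q-1) := Real.rpow_pos_of_pos hnpos _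
    have h2 : (1:ℝ) ≤ (m1:ℝ)^(q-1) * (n:ℝ)^(1-q) := by
      rw [show (1-q) = -(q-1) by ring, Real.rpow_neg hnpos.le, ← div_eq_mul_inv,
        le_div_iff₀ hnpow, one_mul]
      exact h1
    have h3 : 0 ≤ (1+c) * ((m1:ℝ)^(q-1) * (n:ℝ)^(1-q) - 1) * w^(1-q) :=
      mul_nonneg (mul_nonneg (by linarith) (by linarith)) hwq_pos.le
    have h4 : ((1+c) * ((m1:ℝ)^(q-1) * (n:ℝ)^(1-q))) * w^(1-q) = B * (n:ℝ)^(1-q) := by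
      rw [hBdef, hC'def]; ring
    nlinarith [h3, h4]
  have main : ∀ m:ℕ, m1 ≤ m → a m ≤ min T (B * (m:ℝ)^(1-q)) := by
    intro m hm
    induction m, hm using Nat.le_induction with
    | base =>
      have h1 := hstep m1 hm1_1
      have hδm1 : δ (m1 - 1) ≤ T/(2*p) := hδ_le (m1-1) (by omega)
      have hcw : 0 ≤ c * w^(1-q) := by positivity
      have h6 := hBm1 m1 hm1_1 le_rfl
      exact le_min (by linarith) (by linarith)
    | succ m hm ih =>
      have hm8 : (8:ℕ) ≤ m := le_trans hm1_8 hm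
      have hm8R : (8:ℝ) ≤ (m:ℝ) := by exact_mod_cast hm8
      have hm1R : (1:ℝ) ≤ (m:ℝ) := by linarith
      have hmpos : (0:ℝ) < (m:ℝ) := by linarith
      set β := min T (B * (m:ℝ)^(1-q)) with hβdef
      have hβT : β ≤ T := min_le_left _ _
      have hβB : β ≤ B * (m:ℝ)^(1-q) := min_le_right _ _
      have hβ0 : 0 ≤ β := le_min hTpos.le (by positivity)
      have h0 : a (m+1) ≤ a m - w * (a m)^p + δ m := by
        have h := hrec (m+1) (by omega)
        simpa using h
      have h1 : a m - w*(a m)^p ≤ β - w*β^p :=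
        gmono p w T hp1 hw hTpos (le_of_eq hcond) (a m) β (ha m) ih hβT
      have hgβ : β - w*β^p ≤ T - T/p := by
        have h2 := gmono p w T hp1 hw hTpos (le_of_eq hcond) β T hβ0 hβT le_rfl
        rw [hTp] at h2; exact h2
      have hδm : δ m ≤ T/(2*p) := hδ_le m (by omega)
      have hcast : ((m+1:ℕ):ℝ) = (m:ℝ)+1 := by push_cast; ring
      refine le_min (by linarith only [h0, h1, hgβ, hδm, hTle]) ?_
      rw [hcast]
      have hb := bern q (m:ℝ) hq1 hq2 hm1R
      have hbern : B*(m:ℝ)^(1-q) - B*((q-1)*(m:ℝ)^(-q)) ≤ B*((m:ℝ)+1)^(1-q) := by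
        linarith only [mul_le_mul_of_nonneg_left hb hBpos.le]
      rcases le_or_gt (B*(m:ℝ)^(1-q)) T with hA | hBc
      · have hβeq : β = B*(m:ℝ)^(1-q) := min_eq_right hA
        have hww : w * w^(-q) = w^(1-q) := by
          rw [show (1-q) = 1 + (-q) by ring, Real.rpow_add hw, Real.rpow_one]
        have hwβ : w * β^p = C'^p * w^(1-q) * (m:ℝ)^(-q) := by
          rw [hβeq, hBdef, Real.mul_rpow (by positivity) (by positivity),
            Real.mul_rpow (le_of_lt hC'pos) (by positivity),
            ← Real.rpow_mul hw.le, ← Real.rpow_mul hmpos.le,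
            show (1-q)*p = -q by linear_combination -hpq, ← hww]
          ring
        have hδm' : δ m ≤ c * (m:ℝ)^(-q) := by
          have h4 : ((m:ℝ)+1)^(-q) ≤ (m:ℝ)^(-q) :=
            Real.rpow_le_rpow_of_nonpos hmpos (by linarith) (by linarith)
          have h5 := mul_le_mul_of_nonneg_left h4 hc.le
          exact le_trans (hδc m) h5
        have hC1' : (1:ℝ) ≤ C' := by linarith
        have hCp : C'*C' ≤ C'^p := by
          have h5 : C'^(2:ℝ) ≤ C'^p := Real.rpow_le_rpow_of_exponent_le hC1' hp2
          rw [show ((2:ℝ)) = ((2:ℕ):ℝ) by norm_num, Real.rpow_natCast, pow_two] at h5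
          exact h5
        have hX1 : (1:ℝ) ≤ C' * w^(1-q) := by
          have t0 := mul_le_mul_of_nonneg_left hw1q hC'pos.le
          linarith only [t0, hC'1, hc]
        have hkey2 : (q-1)*B + c ≤ C'^p * w^(1-q) := by
          rw [hBdef]
          have s1 : C'*C'*w^(1-q) ≤ C'^p*w^(1-q) := mul_le_mul_of_nonneg_right hCp hwq_pos.le
          have s2 : (1+c)*(C'*w^(1-q)) ≤ C'*(C'*w^(1-q)) :=
            mul_le_mul_of_nonneg_right hC'1 (by positivity)
          have t1 : (0:ℝ) ≤ (2-q) * (C'*w^(1-q)) :=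
            mul_nonneg (by linarith only [hq2]) (by positivity)
          have t2 : (0:ℝ) ≤ c * (C'*w^(1-q) - 1) :=
            mul_nonneg hc.le (by linarith only [hX1])
          linarith only [s1, s2, t1, t2]
        have hmq0 : (0:ℝ) ≤ (m:ℝ)^(-q) := le_of_lt (Real.rpow_pos_of_pos hmpos _)
        have h6 := mul_le_mul_of_nonneg_right hkey2 hmq0
        linarith only [h0, h1, hwβ, hβeq, hδm', h6, hbern]
      · have hβeq : β = T := min_eq_left hBc.le
        rcases le_or_gt T (B*((m:ℝ)+1)^(1-q)) with hB1 | hB2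
        · have h7 : a (m+1) ≤ T := by linarith only [h0, h1, hgβ, hδm, hTle]
          linarith only [h7, hB1]
        · have hm2T : B*(m:ℝ)^(1-q) ≤ 2*T := by
            have h2m : ((m:ℝ)+1) ≤ 2*(m:ℝ) := by linarith only [hm1R]
            have h7 : ((2:ℝ)*(m:ℝ))^(1-q) ≤ ((m:ℝ)+1)^(1-q) :=
              Real.rpow_le_rpow_of_nonpos (by linarith) h2m (by linarith)
            have h8 : ((2:ℝ)*(m:ℝ))^(1-q) = 2^(1-q) * (m:ℝ)^(1-q) :=
              Real.mul_rpow (by norm_num) hmpos.le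
            have h7' : (2:ℝ)^(1-q)*(m:ℝ)^(1-q) ≤ ((m:ℝ)+1)^(1-q) := by rw [← h8]; exact h7
            have h9 : (2:ℝ)^(q-1) ≤ 2 := by
              have h9' := Real.rpow_le_rpow_of_exponent_le (by norm_num : (1:ℝ) ≤ 2)
                (by linarith : q-1 ≤ 1)
              rwa [Real.rpow_one] at h9'
            have h10 : (2:ℝ)^(q-1) * 2^(1-q) = 1 := by
              rw [← Real.rpow_add (by norm_num : (0:ℝ) < 2)]; norm_num
            have h11 : (0:ℝ) < 2^(q-1) := Real.rpow_pos_of_pos (by norm_num) _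
            have h12 : B * ((2:ℝ)^(1-q) * (m:ℝ)^(1-q)) ≤ B * ((m:ℝ)+1)^(1-q) :=
              mul_le_mul_of_nonneg_left h7' hBpos.le
            have h13 : B * ((2:ℝ)^(1-q) * (m:ℝ)^(1-q)) ≤ T := le_trans h12 hB2.le
            have h14 := mul_le_mul_of_nonneg_left h13 h11.le
            have h15 : B*(m:ℝ)^(1-q) ≤ 2^(q-1)*T := by
              calc B*(m:ℝ)^(1-q) = ((2:ℝ)^(q-1) * 2^(1-q)) * (B*(m:ℝ)^(1-q)) := by
                    rw [h10]; ring
                _ = 2^(q-1) * (B*((2:ℝ)^(1-q)*(m:ℝ)^(1-q))) := by ring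
                _ ≤ 2^(q-1) * T := h14
            have h16 : (2:ℝ)^(q-1)*T ≤ 2*T := mul_le_mul_of_nonneg_right h9 hTpos.le
            linarith only [h15, h16]
          have hmq_split : (m:ℝ)^(-q) = (m:ℝ)^(1-q) * (m:ℝ)⁻¹ := by
            rw [show (-q) = (1-q) + (-1) by ring, Real.rpow_add hmpos, Real.rpow_neg_one]
          have hsmall : B*((q-1)*(m:ℝ)^(-q)) ≤ T/(2*p) := by
            have hminv : (m:ℝ)⁻¹ ≤ 8⁻¹ :=
              inv_anti₀ (by norm_num) hm8R
            have e : B*((q-1)*(m:ℝ)^(-q)) = (q-1) * (B*(m:ℝ)^(1-q)) * (m:ℝ)⁻¹ := by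
              rw [hmq_split]; ring
            rw [e]
            have hstep1 : (q-1) * (B*(m:ℝ)^(1-q)) * (m:ℝ)⁻¹ ≤ (q-1) * (2*T) * 8⁻¹ :=
              mul_le_mul (mul_le_mul_of_nonneg_left hm2T (by linarith only [hq1]))
                hminv (by positivity)
                (mul_nonneg (by linarith only [hq1]) (by linarith only [hTpos]))
            have hfin : (q-1)*(2*T)*8⁻¹ ≤ T/(2*p) := by
              rw [le_div_iff₀ (by positivity : (0:ℝ) < 2*p)]
              linarith only [mul_le_mul_of_nonneg_right
                (show p*(q-1) ≤ 2 by rw [hpq]; linarith only [hq2]) hTpos.le]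
            linarith only [hstep1, hfin]
          have hTpT : T - T/p + T/(2*p) = T - T/(2*p) := by field_simp; ring
          linarith only [hbern, hsmall, hBc, h0, h1, hgβ, hδm, hTpT, hβeq]
  intro m hm
  rcases le_or_gt m1 m with h | h
  · exact le_trans (main m h) (min_le_right _ _)
  · have h1 := hstep m hm
    have hδ' : δ (m-1) ≤ c := by
      have h2 := hδc (m-1)
      have h4 : (1:ℝ) ≤ ((m-1:ℕ):ℝ) + 1 := by have h := (Nat.cast_nonneg (m-1) : (0:ℝ) ≤ ((m-1 : ℕ) : ℝ)); linarith
      have h5 : (((m-1:ℕ):ℝ)+1)^(-q) ≤ 1 :=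
        Real.rpow_le_one_of_one_le_of_nonpos h4 (by linarith)
      nlinarith
    have h6 := hBm1 m hm (by exact_mod_cast (Nat.le_of_lt h))
    have hcw : c ≤ c * w^(1-q) := by nlinarith
    have hTp0 : 0 ≤ T/p := by positivity
    linarith
end

section
/- Let $0 < \alpha < \beta$ and $A > 0$. Suppose a sequence $\{a_n\}_{n=0}^\infty$ of reals satisfies: $a_0 < A$; for all $n \ge 1$, $a_n \le a_{n-1} + A n^{-\alpha}$; and whenever $a_\nu \ge A\nu^{-\alpha}$ for some $\nu \ge 1$, then $a_{\nu+1} \le a_\nu(1 - \beta/\nu)$. Then there exists a constant $C = C(\alpha,\beta)$ such that $a_n \le C A n^{-\alpha}$ for all $n \ge 1$. -/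
open Real

private lemma key_bernoulli (α : ℝ) (hα : 0 < α) {x : ℝ} (hx : 0 ≤ x) :
    1 - α * x ≤ (1 + x) ^ (-α) := by
  have h1x : (0:ℝ) < 1 + x := by linarith
  rcases le_or_gt α 1 with hα1 | hα1
  · rcases le_or_gt (1 - α * x) 0 with h | h
    · exact h.trans (Real.rpow_nonneg h1x.le _)
    · have hb : (1 + x) ^ α ≤ 1 + α * x := by
        have := rpow_one_add_le_one_add_mul_self (s := x) (by linarith) hα.le hα1
        linarith
      have hax : (0:ℝ) < 1 + α * x := by nlinarith
      have hpos : (0:ℝ) < (1 + x) ^ α := Real.rpow_pos_of_pos h1x α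
      rw [Real.rpow_neg h1x.le, ← one_div, le_div_iff₀ hpos]
      nlinarith [mul_le_mul_of_nonneg_left hb h.le, sq_nonneg (α*x), mul_nonneg (mul_nonneg hα.le hx) (mul_nonneg hα.le hx)]
  · set s : ℝ := -x / (1 + x) with hs
    have hs1 : -1 ≤ s := by
      rw [hs, neg_div, neg_le, neg_neg]
      rw [div_le_one h1x]; linarith
    have hb := one_add_mul_self_le_rpow_one_add hs1 hα1.le
    have h1s : 1 + s = (1 + x)⁻¹ := by
      field_simp [hs]
      rw [hs, add_mul, div_mul_cancel₀ _ h1x.ne']; ring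
    have heq : (1 + s) ^ α = (1 + x) ^ (-α) := by
      rw [h1s, Real.rpow_neg h1x.le, ← Real.inv_rpow h1x.le]
    have hsx : -x ≤ s := by
      rw [hs, neg_div, neg_le_neg_iff, div_le_iff₀ h1x]
      nlinarith
    calc 1 - α * x = 1 + α * (-x) := by ring
      _ ≤ 1 + α * s := by nlinarith
      _ ≤ (1 + s) ^ α := hb
      _ = (1 + x) ^ (-α) := heq

theorem stmt_11 (α β : ℝ) (hα : 0 < α) (hαβ : α < β) :
    ∃ C : ℝ, 0 < C ∧
      ∀ (A : ℝ) (a : ℕ → ℝ), 0 < A → a 0 < A →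
      (∀ n : ℕ, 1 ≤ n → a n ≤ a (n - 1) + A * (n : ℝ) ^ (-α)) →
      (∀ ν : ℕ, 1 ≤ ν → A * (ν : ℝ) ^ (-α) ≤ a ν → a (ν + 1) ≤ a ν * (1 - β / ν)) →
      ∀ n : ℕ, 1 ≤ n → a n ≤ C * A * (n : ℝ) ^ (-α) := by
  have h2α : (1:ℝ) ≤ (2:ℝ) ^ α := Real.one_le_rpow one_le_two hα.le
  refine ⟨(2:ℝ) ^ α + 2, by positivity, ?_⟩
  intro A a hA h0 hstep hdecay
  set C : ℝ := (2:ℝ) ^ α + 2 with hC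
  have hCpos : 0 < C := by positivity
  intro n hn
  induction n, hn using Nat.le_induction with
  | base =>
      have h1 := hstep 1 le_rfl
      simp only [Nat.cast_one, Real.one_rpow] at h1 ⊢
      have : a 1 ≤ a 0 + A * 1 := by simpa using h1
      nlinarith
  | succ n hn ih =>
      have hnR : (1:ℝ) ≤ (n:ℝ) := by exact_mod_cast hn
      have hnpos : (0:ℝ) < (n:ℝ) := by linarith
      have hcast : ((n + 1 : ℕ) : ℝ) = (n:ℝ) + 1 := by push_cast; ring
      have hn1pos : (0:ℝ) < ((n:ℝ) + 1) := by linarith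
      have hrpos : (0:ℝ) < ((n:ℝ) + 1) ^ (-α) := Real.rpow_pos_of_pos hn1pos _
      have hnrpos : (0:ℝ) < (n:ℝ) ^ (-α) := Real.rpow_pos_of_pos hnpos _
      by_cases hc : A * (n : ℝ) ^ (-α) ≤ a n
      · have hd := hdecay n hn hc
        have hapos : 0 < a n := lt_of_lt_of_le (by positivity) hc
        rcases le_or_gt (1 - β / n) 0 with hneg | hpos
        · have : a (n+1) ≤ 0 := hd.trans (mul_nonpos_of_nonneg_of_nonpos hapos.le hneg)
          rw [hcast]
          nlinarith
        · -- a(n+1) ≤ a n (1-β/n) ≤ C A n^{-α}(1-α/n) ≤ C A (n+1)^{-α}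
          have key : (n:ℝ) ^ (-α) * (1 - α / n) ≤ ((n:ℝ) + 1) ^ (-α) := by
            have hb := key_bernoulli α hα (x := 1 / (n:ℝ)) (by positivity)
            have hmul : (n:ℝ) ^ (-α) * (1 + 1/(n:ℝ)) ^ (-α) = ((n:ℝ) + 1) ^ (-α) := by
              rw [← Real.mul_rpow hnpos.le (by positivity)]
              congr 1
              field_simp
            calc (n:ℝ) ^ (-α) * (1 - α / n) = (n:ℝ) ^ (-α) * (1 - α * (1/n)) := by ring
              _ ≤ (n:ℝ) ^ (-α) * (1 + 1/(n:ℝ)) ^ (-α) :=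
                  mul_le_mul_of_nonneg_left hb hnrpos.le
              _ = ((n:ℝ) + 1) ^ (-α) := hmul
          have h1 : a (n+1) ≤ C * A * (n:ℝ) ^ (-α) * (1 - β / n) :=
            hd.trans (mul_le_mul_of_nonneg_right ih hpos.le)
          have h2 : C * A * (n:ℝ) ^ (-α) * (1 - β / n) ≤ C * A * (n:ℝ) ^ (-α) * (1 - α / n) := by
            apply mul_le_mul_of_nonneg_left _ (by positivity)
            have : α / (n:ℝ) ≤ β / n := by gcongr
            linarith
          have h3 : C * A * (n:ℝ) ^ (-α) * (1 - α / n) ≤ C * A * ((n:ℝ) + 1) ^ (-α) := by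
            calc C * A * (n:ℝ) ^ (-α) * (1 - α / n) = C * A * ((n:ℝ) ^ (-α) * (1 - α / n)) := by
                  ring
              _ ≤ C * A * (((n:ℝ) + 1) ^ (-α)) :=
                  mul_le_mul_of_nonneg_left key (by positivity)
          rw [hcast]
          exact h1.trans (h2.trans h3)
      · push_neg at hc
        have hstep' := hstep (n+1) (by omega)
        simp only [Nat.add_sub_cancel] at hstep'
        have hdouble : (n:ℝ) ^ (-α) ≤ (2:ℝ) ^ α * ((n:ℝ) + 1) ^ (-α) := by
          have h2n : ((n:ℝ) + 1) ≤ 2 * n := by linarith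
          have := Real.rpow_le_rpow_of_nonpos hn1pos h2n (neg_nonpos.mpr hα.le)
          have hmul : ((2:ℝ) * n) ^ (-α) = (2:ℝ) ^ (-α) * (n:ℝ) ^ (-α) :=
            Real.mul_rpow (by norm_num) hnpos.le
          have h2pos : (0:ℝ) < (2:ℝ) ^ α := by positivity
          have h2neg : (2:ℝ) ^ (-α) = ((2:ℝ) ^ α)⁻¹ := by
            rw [Real.rpow_neg (by norm_num)]
          rw [hmul, h2neg] at this
          calc (n:ℝ) ^ (-α) = (2:ℝ)^α * (((2:ℝ)^α)⁻¹ * (n:ℝ) ^ (-α)) := by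
                field_simp
            _ ≤ (2:ℝ)^α * ((n:ℝ) + 1) ^ (-α) := mul_le_mul_of_nonneg_left this h2pos.le
        rw [hcast] at hstep' ⊢
        have : a (n+1) ≤ A * (n:ℝ)^(-α) + A * ((n:ℝ)+1)^(-α) := by linarith
        calc a (n+1) ≤ A * (n:ℝ)^(-α) + A * ((n:ℝ)+1)^(-α) := this
          _ ≤ A * ((2:ℝ)^α * ((n:ℝ)+1)^(-α)) + A * ((n:ℝ)+1)^(-α) :=
              add_le_add_left (mul_le_mul_of_nonneg_left hdouble hA.le) _
          _ = ((2:ℝ)^α + 1) * A * ((n:ℝ)+1)^(-α) := by ring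
          _ ≤ C * A * ((n:ℝ)+1)^(-α) := by
              apply mul_le_mul_of_nonneg_right _ hrpos.le
              apply mul_le_mul_of_nonneg_right _ hA.le
              rw [hC]; linarith
end
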